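/- arXiv:1503.00351 — 3 statements merged into one kernel-verified Lean document; each statement's English description precedes it below -/
import Mathlib

section
/- Let G be an infinite gap of a sibling σ_d-invariant geolamination that is periodic of period k, and suppose the basis G' = G ∩ S¹ is countable (a caterpillar gap). Then the degree of σ_d^k restricted to the boundary of G is one, and G' contains a σ_d^k-periodic point. -/
open Function Set

noncomputable section

/-- The circle `ℝ/ℤ`. -/
abbrev S1 := AddCircle (1 : ℝ)

/-- The angle-`d`-tupling map `σ_d : t ↦ d·t (mod 1)`. -/
def sig (d : ℕ) (t : S1) : S1 := d • t

/-- The point of the unit circle in `ℂ` corresponding to `t ∈ ℝ/ℤ`. -/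
def pt (t : S1) : ℂ := (AddCircle.toCircle t : ℂ)

/-- The chord of the closed unit disk joining two circle points. -/
def chord (a b : S1) : Set ℂ := segment ℝ (pt a) (pt b)

/-- Two chords cross (are linked) if they meet in the open unit disk. -/
def Crosses (c₁ c₂ : Set ℂ) : Prop := ∃ z, z ∈ c₁ ∧ z ∈ c₂ ∧ ‖z‖ < 1

/-- A sibling `σ_d`-invariant geolamination: a symmetric family of (possibly degenerate)
pairwise unlinked chords, containing all degenerate chords, closed under taking images,
having preimages of leaves, and having `d` pairwise disjoint sibling leaves for every leaf
with non-degenerate image. -/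
structure Geolam (d : ℕ) where
  leaves : Set (S1 × S1)
  symm : ∀ p ∈ leaves, (p.2, p.1) ∈ leaves
  degen : ∀ t : S1, (t, t) ∈ leaves
  unlinked : ∀ p ∈ leaves, ∀ q ∈ leaves,
    chord p.1 p.2 = chord q.1 q.2 ∨ ¬ Crosses (chord p.1 p.2) (chord q.1 q.2)
  fwd : ∀ p ∈ leaves, (sig d p.1, sig d p.2) ∈ leaves
  bwd : ∀ p ∈ leaves, ∃ q ∈ leaves, (sig d q.1, sig d q.2) = p
  sibling : ∀ p ∈ leaves, sig d p.1 ≠ sig d p.2 →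
    ∃ f : Fin d → S1 × S1, (∃ i, f i = p) ∧ (∀ i, f i ∈ leaves) ∧
      (∀ i, sig d (f i).1 = sig d p.1 ∧ sig d (f i).2 = sig d p.2) ∧
      (∀ i j, i ≠ j → Disjoint (chord (f i).1 (f i).2) (chord (f j).1 (f j).2))

/-- The solid of a geolamination: the union of all its leaves. -/
def solid (d : ℕ) (L : Geolam d) : Set ℂ := ⋃ p ∈ L.leaves, chord p.1 p.2

/-- A gap of a geolamination: the closure of a connected component of the open unit disk
minus the solid. -/
def IsGap (d : ℕ) (L : Geolam d) (G : Set ℂ) : Prop :=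
  ∃ z ∈ Metric.ball (0 : ℂ) 1 \ solid d L,
    G = closure (connectedComponentIn (Metric.ball (0 : ℂ) 1 \ solid d L) z)

/-- The basis of a gap: circle points lying in it. -/
def gapBasis (G : Set ℂ) : Set S1 := {t : S1 | pt t ∈ G}

/-- `f` has degree `m` on the (boundary extension over the) set `A`: every value is attained
at least `m` times on `A`, and some value exactly `m` times. -/
def DegreeOn (f : S1 → S1) (A : Set S1) (m : ℕ) : Prop :=
  (∀ y ∈ f '' A, m ≤ {x ∈ A | f x = y}.ncard) ∧ ∃ y ∈ f '' A, {x ∈ A | f x = y}.ncard = m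


/-! ### Auxiliary lemmas -/

open Filter Topology

namespace CaterpillarAux

lemma torsion_finite {n : ℕ} (hn : 0 < n) : {t : S1 | n • t = 0}.Finite := by
  have h : {t : S1 | n • t = 0} ⊆ ⋃ m ∈ Finset.Icc 1 n, {u : S1 | addOrderOf u = m} := by
    intro t ht
    have hd : addOrderOf t ∣ n := addOrderOf_dvd_iff_nsmul_eq_zero.mpr ht
    have h0 : addOrderOf t ≠ 0 := by
      intro h0; rw [h0] at hd; exact hn.ne' (Nat.eq_zero_of_zero_dvd hd)
    have h1 : addOrderOf t ∈ Finset.Icc 1 n :=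
      Finset.mem_Icc.mpr ⟨Nat.one_le_iff_ne_zero.mpr h0, Nat.le_of_dvd hn hd⟩
    exact mem_biUnion h1 rfl
  refine Set.Finite.subset ?_ h
  refine Set.Finite.biUnion (Finset.Icc 1 n).finite_toSet fun m hm => ?_
  exact AddCircle.finite_setOfPred_addOrderOf_eq (p := (1:ℝ))
    (Nat.lt_of_lt_of_le Nat.zero_lt_one (Finset.mem_Icc.mp hm).1)

lemma fiber_finite {n : ℕ} (hn : 0 < n) (y : S1) : {x : S1 | n • x = y}.Finite := by
  rcases em (∃ x₀ : S1, n • x₀ = y) with ⟨x₀, hx₀⟩ | h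
  · have : {x : S1 | n • x = y} ⊆ (fun t => x₀ + t) '' {t : S1 | n • t = 0} := by
      intro x hx
      refine ⟨x - x₀, ?_, by show x₀ + (x - x₀) = x; rw [add_comm, sub_add_cancel]⟩
      have : n • (x - x₀) = n • x - n • x₀ := nsmul_sub x x₀ n
      simp only [mem_setOf_eq] at hx ⊢
      rw [this, hx, hx₀, sub_self]
    exact ((torsion_finite hn).image _).subset this
  · have : {x : S1 | n • x = y} = ∅ := by
      ext x; simp only [mem_setOf_eq, mem_empty_iff_false, iff_false]
      exact fun hx => h ⟨x, hx⟩
    rw [this]; exact finite_empty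

lemma uncountable_nat_bool : ¬ (univ : Set (ℕ → Bool)).Countable := by
  intro h
  haveI : Countable (ℕ → Bool) := Set.countable_univ_iff.mp h
  obtain ⟨g, hg⟩ := exists_surjective_nat (ℕ → Bool)
  obtain ⟨m, hm⟩ := hg (fun j => !(g j j))
  have := congrFun hm m
  simp at this

lemma exists_isolated {M : Set S1} (hcl : IsClosed M) (hct : M.Countable)
    (hne : M.Nonempty) : ∃ x ∈ M, x ∉ closure (M \ {x}) := by
  by_contra h
  push_neg at h
  have hpre : Preperfect M := by
    intro x hx
    rw [accPt_iff_nhds]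
    intro U hU
    have hc := h x hx
    rw [mem_closure_iff_nhds] at hc
    obtain ⟨y, hyU, hyM, hyx⟩ := hc U hU
    exact ⟨y, ⟨hyU, hyM⟩, hyx⟩
  obtain ⟨F, hFr, _, hFi⟩ := (Perfect.mk hcl hpre).exists_nat_bool_injection hne
  refine uncountable_nat_bool ?_
  have h1 : (F ⁻¹' M).Countable := hct.preimage hFi
  refine h1.mono fun g _ => ?_
  exact hFr (mem_range_self g)

lemma closure_diff_iff (M : Set S1) (x : S1) :
    x ∈ closure (M \ {x}) ↔ x ∈ derivedSet M := by
  rw [mem_derivedSet, accPt_principal_iff_clusterPt, mem_closure_iff_clusterPt]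

lemma chain_sInter_nonempty {c : Set (Set S1)} (hchain : IsChain (· ⊆ ·) c)
    (hcne : c.Nonempty) (hB : ∀ B ∈ c, B.Nonempty ∧ IsClosed B) :
    (⋂₀ c).Nonempty := by
  haveI : Nonempty c := hcne.to_subtype
  rw [sInter_eq_iInter]
  refine IsCompact.nonempty_iInter_of_directed_nonempty_isCompact_isClosed
    (fun B : c => (B : Set S1)) ?_ (fun B => (hB B B.2).1)
    (fun B => ((hB B B.2).2).isCompact) (fun B => (hB B B.2).2)
  intro B1 B2
  rcases hchain.total B1.2 B2.2 with h | h
  · exact ⟨B1, subset_rfl, h⟩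
  · exact ⟨B2, h, subset_rfl⟩

lemma exists_periodic_of_invariant {f : S1 → S1} (hf : Continuous f) {A : Set S1}
    (hcl : IsClosed A) (hct : A.Countable) (hne : A.Nonempty) (hinv : f '' A ⊆ A) :
    ∃ x ∈ A, ∃ m, 1 ≤ m ∧ f^[m] x = x := by
  set S : Set (Set S1) := {B | B.Nonempty ∧ IsClosed B ∧ B ⊆ A ∧ f '' B ⊆ B} with hS
  have hzorn : ∀ c ⊆ S, IsChain (· ⊆ ·) c → c.Nonempty → ∃ lb ∈ S, ∀ s ∈ c, lb ⊆ s := by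
    intro c hcS hchain hcne
    refine ⟨⋂₀ c, ⟨?_, ?_, ?_, ?_⟩, fun s hs => sInter_subset_of_mem hs⟩
    · exact chain_sInter_nonempty hchain hcne fun B hB => ⟨(hcS hB).1, (hcS hB).2.1⟩
    · exact isClosed_sInter fun B hB => (hcS hB).2.1
    · obtain ⟨B0, hB0⟩ := hcne
      exact (sInter_subset_of_mem hB0).trans (hcS hB0).2.2.1
    · rintro y ⟨x, hx, rfl⟩
      intro B hB
      exact (hcS hB).2.2.2 ⟨x, hx B hB, rfl⟩
  obtain ⟨M, hMA, hMmin⟩ := zorn_superset_nonempty S hzorn A ⟨hne, hcl, subset_rfl, hinv⟩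
  obtain ⟨hMne, hMcl, hMsub, hMinv⟩ := hMmin.prop
  obtain ⟨x, hxM, hxiso⟩ := exists_isolated hMcl (hct.mono hMsub) hMne
  have horb : ∀ m : ℕ, f^[m] (f x) ∈ M := by
    intro m
    induction m with
    | zero => exact hMinv ⟨x, hxM, rfl⟩
    | succ m ih => rw [iterate_succ_apply']; exact hMinv ⟨_, ih, rfl⟩
  set O : Set S1 := range (fun m : ℕ => f^[m] (f x)) with hO
  have hOM : O ⊆ M := by rintro _ ⟨m, rfl⟩; exact horb m
  have hBS : closure O ∈ S := by
    refine ⟨⟨f x, subset_closure ⟨0, rfl⟩⟩, isClosed_closure,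
      ((hMcl.closure_subset_iff.mpr hOM).trans hMsub), ?_⟩
    refine (image_closure_subset_closure_image hf).trans (closure_mono ?_)
    rintro _ ⟨_, ⟨m, rfl⟩, rfl⟩
    exact ⟨m + 1, iterate_succ_apply' f m (f x)⟩
  have hMO : M ⊆ closure O :=
    hMmin.2 hBS.out (hMcl.closure_subset_iff.mpr hOM)
  have hxO : x ∈ O := by
    by_contra hxnO
    have : O ⊆ M \ {x} := fun z hz => ⟨hOM hz, fun he => hxnO (he ▸ hz)⟩
    exact hxiso (closure_mono this (hMO hxM))
  obtain ⟨m, hm⟩ := hxO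
  exact ⟨x, hMsub hxM, m + 1, Nat.succ_le_succ (Nat.zero_le m),
    by rw [iterate_succ_apply]; exact hm⟩

lemma no_finite_two_to_one {n : ℕ} {B : Set S1} (hB : B.Finite) (hne : B.Nonempty)
    (h : ∀ y ∈ B, ∃ u v, u ∈ B ∧ v ∈ B ∧ u ≠ v ∧ n • u = y ∧ n • v = y) : False := by
  choose! u v hu hv huv hgu hgv using h
  have hiu : InjOn u B := by
    intro a ha b hb he
    rw [← hgu a ha, ← hgu b hb, he]
  have hiv : InjOn v B := by
    intro a ha b hb he
    rw [← hgv a ha, ← hgv b hb, he]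
  have hUV : Disjoint (u '' B) (v '' B) := by
    rw [Set.disjoint_left]
    rintro _ ⟨y, hy, rfl⟩ ⟨y', hy', he⟩
    have h2 : n • v y' = y' := hgv y' hy'
    rw [he, hgu y hy] at h2
    rw [← h2] at he
    exact huv y hy he.symm
  have hins : u '' B ∪ v '' B ⊆ B :=
    union_subset (image_subset_iff.mpr fun y hy => hu y hy)
      (image_subset_iff.mpr fun y hy => hv y hy)
  have hcard : (u '' B ∪ v '' B).ncard = 2 * B.ncard := by
    rw [Set.ncard_union_eq hUV (hB.image u) (hB.image v),
        Set.ncard_image_of_injOn hiu, Set.ncard_image_of_injOn hiv]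
    ring
  have hle := Set.ncard_le_ncard hins hB
  have hpos : 0 < B.ncard := (Set.ncard_pos hB).mpr hne
  omega

lemma exists_singleton_fiber {n : ℕ} (hn : 0 < n) {A : Set S1} (hcl : IsClosed A)
    (hct : A.Countable) (hinv : (fun t : S1 => n • t) '' A = A) (hne : A.Nonempty) :
    ∃ y ∈ A, ∃ x₀ : S1, {x ∈ A | n • x = y} = {x₀} := by
  have hfc : Continuous fun t : S1 => n • t := by continuity
  by_contra hcon
  push_neg at hcon
  have H : ∀ y ∈ A, ∃ u v, u ∈ A ∧ v ∈ A ∧ u ≠ v ∧ n • u = y ∧ n • v = y := by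
    intro y hy
    have hy' : y ∈ (fun t : S1 => n • t) '' A := by rw [hinv]; exact hy
    obtain ⟨x₀, hx₀A, hx₀⟩ := hy'
    have hne2 : {x ∈ A | n • x = y} ≠ {x₀} := hcon y hy x₀
    have hex : ∃ x₁ ∈ {x ∈ A | n • x = y}, x₁ ≠ x₀ := by
      by_contra h2
      push_neg at h2
      refine hne2 (Subset.antisymm (fun z hz => h2 z hz) ?_)
      rintro z rfl
      exact ⟨hx₀A, hx₀⟩
    obtain ⟨x₁, hx₁, hne10⟩ := hex
    exact ⟨x₁, x₀, hx₁.1, hx₀A, hne10, hx₁.2, hx₀⟩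
  set Kne : Set S1 := {t : S1 | n • t = 0 ∧ t ≠ 0} with hKne
  have hKfin : Kne.Finite := (torsion_finite hn).subset fun t ht => ht.1
  have hKcl : IsClosed Kne := hKfin.isClosed
  have hKne0 : ∀ {a b : S1}, a - b ∈ Kne → a ≠ b := by
    intro a b hab he
    exact hab.2 (by rw [he, sub_self])
  have hKmem : ∀ {a b : S1}, a ≠ b → n • a = n • b → a - b ∈ Kne := by
    intro a b hab he
    exact ⟨by rw [nsmul_sub, he, sub_self], sub_ne_zero.mpr hab⟩
  set S : Set (Set S1) := {B | B.Nonempty ∧ IsClosed B ∧ B ⊆ A ∧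
      ∀ y ∈ B, ∃ a b, a ∈ B ∧ b ∈ B ∧ a - b ∈ Kne ∧ n • a = y ∧ n • b = y} with hS
  have hAS : A ∈ S := by
    refine ⟨hne, hcl, subset_rfl, fun y hy => ?_⟩
    obtain ⟨a, b, h1, h2, h3, h4, h5⟩ := H y hy
    exact ⟨a, b, h1, h2, hKmem h3 (by rw [h4, h5]), h4, h5⟩
  have hzorn : ∀ c ⊆ S, IsChain (· ⊆ ·) c → c.Nonempty → ∃ lb ∈ S, ∀ s ∈ c, lb ⊆ s := by
    intro c hcS hchain hcne
    haveI : Nonempty c := hcne.to_subtype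
    refine ⟨⋂₀ c, ⟨?_, ?_, ?_, ?_⟩, fun s hs => sInter_subset_of_mem hs⟩
    · exact chain_sInter_nonempty hchain hcne fun B hB => ⟨(hcS hB).1, (hcS hB).2.1⟩
    · exact isClosed_sInter fun B hB => (hcS hB).2.1
    · obtain ⟨B0, hB0⟩ := hcne
      exact (sInter_subset_of_mem hB0).trans (hcS hB0).2.2.1
    · intro y hy
      set T : c → Set (S1 × S1) := fun B =>
        {p : S1 × S1 | p.1 ∈ (B : Set S1) ∧ p.2 ∈ (B : Set S1) ∧ p.1 - p.2 ∈ Kne ∧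
             n • p.1 = y ∧ n • p.2 = y} with hT
      have hTcl : ∀ B : c, IsClosed (T B) := by
        intro B
        have h1 : IsClosed (B : Set S1) := (hcS B.2).2.1
        exact (h1.preimage continuous_fst).inter ((h1.preimage continuous_snd).inter
          ((hKcl.preimage (continuous_fst.sub continuous_snd)).inter
          ((isClosed_eq (hfc.comp continuous_fst) continuous_const).inter
           (isClosed_eq (hfc.comp continuous_snd) continuous_const))))
      have hTne : ∀ B : c, (T B).Nonempty := by
        intro B
        obtain ⟨a, b, h1, h2, h3, h4, h5⟩ := (hcS B.2).2.2.2 y (hy B B.2)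
        exact ⟨(a, b), h1, h2, h3, h4, h5⟩
      have hTdir : Directed (· ⊇ ·) T := by
        intro B1 B2
        rcases hchain.total B1.2 B2.2 with h | h
        · refine ⟨B1, subset_rfl, fun p hp => ?_⟩
          exact ⟨h hp.1, h hp.2.1, hp.2.2⟩
        · refine ⟨B2, fun p hp => ⟨h hp.1, h hp.2.1, hp.2.2⟩, subset_rfl⟩
      obtain ⟨p, hp⟩ := IsCompact.nonempty_iInter_of_directed_nonempty_isCompact_isClosed
        T hTdir hTne (fun B => (hTcl B).isCompact) hTcl
      rw [mem_iInter] at hp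
      refine ⟨p.1, p.2, fun B hB => (hp ⟨B, hB⟩).1, fun B hB => (hp ⟨B, hB⟩).2.1,
        (hp ⟨_, hcne.some_mem⟩).2.2⟩
  obtain ⟨M, hMA, hMmin⟩ := zorn_superset_nonempty S hzorn A hAS
  obtain ⟨hMne, hMcl, hMsub, hMprop⟩ := hMmin.prop
  have hMct : M.Countable := hct.mono hMsub
  have hMinf : M.Infinite := by
    intro hfin
    exact no_finite_two_to_one hfin hMne fun y hy => by
      obtain ⟨a, b, h1, h2, h3, h4, h5⟩ := hMprop y hy
      exact ⟨a, b, h1, h2, hKne0 h3, h4, h5⟩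
  choose! uu vv huu hvv hKuv hgu hgv using hMprop
  set M' : Set S1 := M ∩ derivedSet M with hM'
  have hM'S : M' ∈ S := by
    refine ⟨?_, hMcl.inter (isClosed_derivedSet M), (inter_subset_left).trans hMsub, ?_⟩
    · obtain ⟨x, hxM, hx⟩ := hMinf.exists_accPt_of_subset_isCompact
        hMcl.isCompact subset_rfl
      exact ⟨x, hxM, hx⟩
    · intro y hy
      obtain ⟨hyM, hyD⟩ := hy
      have hyc : y ∈ closure (M \ {y}) := (closure_diff_iff M y).mpr hyD
      rw [mem_closure_iff_seq_limit] at hyc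
      obtain ⟨ys, hys, hty⟩ := hyc
      set ps : ℕ → S1 × S1 := fun j => (uu (ys j), vv (ys j)) with hps
      have hpsmem : ∀ j, ps j ∈ M ×ˢ M :=
        fun j => ⟨huu (ys j) (hys j).1, hvv (ys j) (hys j).1⟩
      obtain ⟨q, hqmem, φ, hφ, hconv⟩ :=
        (hMcl.isCompact.prod hMcl.isCompact).tendsto_subseq hpsmem
      have hu : Tendsto (fun j => uu (ys (φ j))) atTop (𝓝 q.1) :=
        ((continuous_fst.tendsto q).comp hconv)
      have hv : Tendsto (fun j => vv (ys (φ j))) atTop (𝓝 q.2) :=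
        ((continuous_snd.tendsto q).comp hconv)
      have htyφ : Tendsto (fun j => ys (φ j)) atTop (𝓝 y) :=
        hty.comp hφ.tendsto_atTop
      have hqu : n • q.1 = y := by
        refine tendsto_nhds_unique ((hfc.tendsto q.1).comp hu) ?_
        refine htyφ.congr fun j => ?_
        exact (hgu (ys (φ j)) (hys (φ j)).1).symm
      have hqv : n • q.2 = y := by
        refine tendsto_nhds_unique ((hfc.tendsto q.2).comp hv) ?_
        refine htyφ.congr fun j => ?_
        exact (hgv (ys (φ j)) (hys (φ j)).1).symm
      have hqK : q.1 - q.2 ∈ Kne := by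
        refine hKcl.mem_of_tendsto (((continuous_fst.sub continuous_snd).tendsto q).comp hconv)
          (Eventually.of_forall fun j => ?_)
        exact hKuv (ys (φ j)) (hys (φ j)).1
      have hq1 : q.1 ∈ M' := by
        refine ⟨hqmem.1, (closure_diff_iff M q.1).mp ?_⟩
        refine mem_closure_of_tendsto hu (Eventually.of_forall fun j => ?_)
        refine ⟨huu (ys (φ j)) (hys (φ j)).1, fun he => ?_⟩
        have := hgu (ys (φ j)) (hys (φ j)).1
        rw [mem_singleton_iff] at he
        rw [he, hqu] at this
        exact (hys (φ j)).2 (this.symm ▸ rfl)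
      have hq2 : q.2 ∈ M' := by
        refine ⟨hqmem.2, (closure_diff_iff M q.2).mp ?_⟩
        refine mem_closure_of_tendsto hv (Eventually.of_forall fun j => ?_)
        refine ⟨hvv (ys (φ j)) (hys (φ j)).1, fun he => ?_⟩
        have := hgv (ys (φ j)) (hys (φ j)).1
        rw [mem_singleton_iff] at he
        rw [he, hqv] at this
        exact (hys (φ j)).2 (this.symm ▸ rfl)
      exact ⟨q.1, q.2, hq1, hq2, hqK, hqu, hqv⟩
  have hMM' : M ⊆ M' := hMmin.2 hM'S.out inter_subset_left
  obtain ⟨x, hxM, hxiso⟩ := exists_isolated hMcl hMct hMne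
  exact hxiso ((closure_diff_iff M x).mpr (hMM' hxM).2)

lemma sig_iterate (d k : ℕ) : (sig d)^[k] = fun t : S1 => (d ^ k) • t := by
  induction k with
  | zero => funext t; simp
  | succ k ih =>
    funext t
    rw [iterate_succ_apply', ih]
    show sig d ((d ^ k) • t) = (d ^ (k + 1)) • t
    show d • ((d ^ k) • t) = (d ^ (k + 1)) • t
    rw [← mul_nsmul, pow_succ, mul_comm]

lemma degree_one {n : ℕ} (hn : 0 < n) {A : Set S1} (hcl : IsClosed A)
    (hct : A.Countable) (hinv : (fun t : S1 => n • t) '' A = A) (hne : A.Nonempty) :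
    DegreeOn (fun t : S1 => n • t) A 1 := by
  constructor
  · rintro y ⟨x, hxA, rfl⟩
    have hfin : {x' ∈ A | (fun t : S1 => n • t) x' = n • x}.Finite :=
      (fiber_finite hn (n • x)).subset fun z hz => hz.2
    exact (Set.ncard_pos hfin).mpr ⟨x, hxA, rfl⟩
  · obtain ⟨y, hyA, x₀, hx₀⟩ := exists_singleton_fiber hn hcl hct hinv hne
    refine ⟨y, by rw [hinv]; exact hyA, ?_⟩
    rw [show {x ∈ A | (fun t : S1 => n • t) x = y} = {x₀} from hx₀]
    exact Set.ncard_singleton x₀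

end CaterpillarAux

/-- a caterpillar gap (periodic infinite gap with countable basis) has
boundary degree one and contains a periodic point in its basis. -/
theorem stmt3 (d k : ℕ) (hd : 2 ≤ d) (hk : 1 ≤ k) (L : Geolam d) (G : Set ℂ)
    (hG : IsGap d L G)
    (hcnt : (gapBasis G).Countable) (hinf : (gapBasis G).Infinite)
    (hinv : (sig d)^[k] '' gapBasis G = gapBasis G)
    (hmin : ∀ j, 1 ≤ j → j < k → (sig d)^[j] '' gapBasis G ≠ gapBasis G) :
    DegreeOn ((sig d)^[k]) (gapBasis G) 1 ∧
    ∃ x ∈ gapBasis G, ∃ m, 1 ≤ m ∧ ((sig d)^[k])^[m] x = x := by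
  classical
  obtain ⟨z, hz, hGdef⟩ := hG
  have hptc : Continuous pt := continuous_subtype_val.comp AddCircle.continuous_toCircle
  have hGcl : IsClosed G := hGdef ▸ isClosed_closure
  have hAcl : IsClosed (gapBasis G) := hGcl.preimage hptc
  set n : ℕ := d ^ k with hn
  have hnpos : 0 < n := pow_pos (lt_of_lt_of_le Nat.zero_lt_two hd) k
  have hit : (sig d)^[k] = fun t : S1 => n • t := CaterpillarAux.sig_iterate d k
  rw [hit] at hinv ⊢
  have hne : (gapBasis G).Nonempty := hinf.nonempty
  constructor
  · exact CaterpillarAux.degree_one hnpos hAcl hcnt hinv hne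
  · exact CaterpillarAux.exists_periodic_of_invariant (by continuity) hAcl hcnt hne hinv.subset

end
end

section
/- Let C be a cone of a sibling σ_d-invariant geolamination with a periodic vertex v (a family of leaves all having endpoint v). If C is finite, then every leaf of C is periodic; more precisely, every point of the basis C' has the same period as v under σ_d. -/
open Function Set

noncomputable section

namespace Scaffold

/-! ### AddCircle arithmetic -/

lemma coe_int_zero (k : ℤ) : ((k : ℝ) : S1) = 0 := by
  rw [AddCircle.coe_eq_zero_iff]; exact ⟨k, by simp⟩

lemma coe_fract (r : ℝ) : ((Int.fract r : ℝ) : S1) = (r : S1) := by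
  have h0 : ((⌊r⌋ : ℝ) : S1) = 0 := coe_int_zero _
  have h2 : (r : ℝ) = Int.fract r + (⌊r⌋ : ℝ) := by rw [Int.fract]; ring
  calc ((Int.fract r : ℝ) : S1) = ((Int.fract r : ℝ) : S1) + 0 := by rw [add_zero]
    _ = ((Int.fract r : ℝ) : S1) + ((⌊r⌋ : ℝ) : S1) := by rw [h0]
    _ = ((Int.fract r + (⌊r⌋:ℝ) : ℝ) : S1) := by rw [AddCircle.coe_add]
    _ = _ := by rw [← h2]

lemma coe_eq_zero_iff_fract (r : ℝ) : ((r : ℝ) : S1) = 0 ↔ Int.fract r = 0 := by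
  constructor
  · intro h
    rcases (AddCircle.coe_eq_zero_iff (p := (1:ℝ))).1 h with ⟨n, hn⟩
    have : r = (n : ℝ) := by simpa using hn.symm
    simp [this, Int.fract_intCast]
  · intro h
    rcases Int.fract_eq_iff.1 h with ⟨-, -, z, hz⟩
    have : r = (z : ℝ) := by linarith
    rw [this]; exact coe_int_zero z

lemma rep_exists (z w : S1) : ∃ t : ℝ, 0 ≤ t ∧ t < 1 ∧ w = z + (t : S1) := by
  have : ∃ r : ℝ, (r : S1) = w - z := by
    induction (w - z) using QuotientAddGroup.induction_on with
    | H r => exact ⟨r, rfl⟩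
  rcases this with ⟨r, hr⟩
  refine ⟨Int.fract r, Int.fract_nonneg r, Int.fract_lt_one r, ?_⟩
  rw [coe_fract, hr]; abel

lemma rep_unique {z : S1} {t u : ℝ} (ht0 : 0 ≤ t) (ht1 : t < 1) (hu0 : 0 ≤ u) (hu1 : u < 1)
    (h : z + (t : S1) = z + (u : S1)) : t = u := by
  have hc : ((t : ℝ) : S1) = ((u : ℝ) : S1) := add_left_cancel h
  have h2 : ((t - u : ℝ) : S1) = 0 := by
    rw [AddCircle.coe_sub, hc]; simp
  have h3 := (coe_eq_zero_iff_fract _).1 h2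
  rcases Int.fract_eq_iff.1 h3 with ⟨-, -, z', hz'⟩
  have hz2 : t - u = (z' : ℝ) := by linarith
  have hl : (-1 : ℝ) < (z' : ℝ) := by linarith
  have hr : (z' : ℝ) < 1 := by linarith
  have hl' : (-1 : ℤ) < z' := by exact_mod_cast hl
  have hr' : z' < (1 : ℤ) := by exact_mod_cast hr
  have : z' = 0 := by omega
  rw [this] at hz2; push_cast at hz2; linarith

lemma coe_ne_zero_of_Ioo {t : ℝ} (h : t ∈ Ioo (0:ℝ) 1) : (t : S1) ≠ 0 := by
  intro h0
  have := (coe_eq_zero_iff_fract t).1 h0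
  rw [Int.fract_eq_self.2 ⟨le_of_lt h.1, h.2⟩] at this
  exact absurd this (ne_of_gt h.1)

lemma sig_add (d : ℕ) (a b : S1) : sig d (a + b) = sig d a + sig d b := smul_add d a b

lemma sig_coe (d : ℕ) (r : ℝ) : sig d ((r : ℝ) : S1) = (((d : ℝ) * r : ℝ) : S1) := by
  show (d : ℕ) • ((r : ℝ) : S1) = _
  rw [← AddCircle.coe_nsmul]
  congr 1
  simp [nsmul_eq_mul]

lemma sig_iter_coe (d : ℕ) (n : ℕ) (r : ℝ) :
    (sig d)^[n] ((r : ℝ) : S1) = ((((d : ℝ))^n * r : ℝ) : S1) := by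
  induction n with
  | zero => simp
  | succ n ih =>
      rw [Function.iterate_succ_apply', ih, sig_coe]
      congr 1
      ring

lemma sig_iter_add (d : ℕ) (n : ℕ) (z : S1) (r : ℝ) :
    (sig d)^[n] (z + (r : S1)) = (sig d)^[n] z + ((((d:ℝ))^n * r : ℝ) : S1) := by
  induction n with
  | zero => simp
  | succ n ih =>
      rw [Function.iterate_succ_apply', ih, Function.iterate_succ_apply', sig_add, sig_coe]
      congr 2
      ring

/-! ### Geometry of chords -/

lemma norm_pt (t : S1) : ‖pt t‖ = 1 := by
  have : ‖pt t‖ = 1 := Circle.norm_coe _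
  simpa using this

lemma pt_inj : Function.Injective pt := by
  intro a b h
  exact AddCircle.injective_toCircle one_ne_zero (Subtype.coe_injective h)

lemma pt_add (a b : S1) : pt (a + b) = pt a * pt b := by
  unfold pt
  rw [AddCircle.toCircle_add]
  simp

lemma pt_coe (r : ℝ) : pt ((r : ℝ) : S1) = Complex.exp ((2 * Real.pi * r : ℝ) * Complex.I) := by
  unfold pt
  rw [AddCircle.toCircle_apply_mk]
  rw [Circle.coe_exp]
  norm_num

/-- Signed area/determinant of two complex numbers. -/
def det2 (z w : ℂ) : ℝ := z.re * w.im - z.im * w.re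

lemma det2_mul_unit (u z w : ℂ) (hu : Complex.normSq u = 1) :
    det2 (u * z) (u * w) = det2 z w := by
  have h : Complex.normSq u = u.re * u.re + u.im * u.im := rfl
  rw [h] at hu
  unfold det2
  simp only [Complex.mul_re, Complex.mul_im]
  linear_combination (z.re * w.im - z.im * w.re) * hu

lemma rid (B C : ℝ) :
    (Real.cos (2*B) - 1) * Real.sin (2*C) - Real.sin (2*B) * (Real.cos (2*C) - 1)
      = 4 * Real.sin B * Real.sin C * Real.sin (C - B) := by
  rw [Real.sin_two_mul, Real.sin_two_mul, Real.cos_two_mul, Real.cos_two_mul, Real.sin_sub,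
    Real.cos_sq', Real.cos_sq']
  ring

lemma det_pt (v : S1) (β γ : ℝ) :
    det2 (pt (v + ((β:ℝ):S1)) - pt v) (pt (v + ((γ:ℝ):S1)) - pt v)
      = 4 * Real.sin (Real.pi*β) * Real.sin (Real.pi*γ) * Real.sin (Real.pi*(γ-β)) := by
  have hfact : ∀ r : ℝ, pt (v + ((r:ℝ):S1)) - pt v
      = pt v * (Complex.exp ((2 * Real.pi * r : ℝ) * Complex.I) - 1) := by
    intro r
    rw [pt_add, pt_coe]
    ring
  rw [hfact, hfact]
  rw [det2_mul_unit _ _ _ (by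
    have := norm_pt v
    have h2 : ‖pt v‖ = 1 := by simpa using this
    rw [← Complex.sq_norm, h2]; norm_num)]
  unfold det2
  simp only [Complex.sub_re, Complex.sub_im, Complex.exp_ofReal_mul_I_re,
    Complex.exp_ofReal_mul_I_im, Complex.one_re, Complex.one_im]
  have h1 : 2 * Real.pi * β = 2 * (Real.pi * β) := by ring
  have h2 : 2 * Real.pi * γ = 2 * (Real.pi * γ) := by ring
  rw [h1, h2]
  have := rid (Real.pi * β) (Real.pi * γ)
  calc (Real.cos (2*(Real.pi*β)) - 1) * (Real.sin (2*(Real.pi*γ)) - 0)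
        - (Real.sin (2*(Real.pi*β)) - 0) * (Real.cos (2*(Real.pi*γ)) - 1)
      = (Real.cos (2*(Real.pi*β)) - 1) * Real.sin (2*(Real.pi*γ))
        - Real.sin (2*(Real.pi*β)) * (Real.cos (2*(Real.pi*γ)) - 1) := by ring
    _ = 4 * Real.sin (Real.pi*β) * Real.sin (Real.pi*γ)
          * Real.sin (Real.pi*γ - Real.pi*β) := by rw [this]
    _ = _ := by ring_nf

lemma extreme_of_norm_one {C D z : ℂ} (hz : z ∈ segment ℝ C D)
    (hC : ‖C‖ ≤ 1) (hD : ‖D‖ ≤ 1) (hn : ‖z‖ = 1) : z = C ∨ z = D := by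
  obtain ⟨s, t, hs, ht, hst, rfl⟩ := hz
  by_cases hCD : C = D
  · left; rw [hCD, ← add_smul, hst, one_smul]
  rcases eq_or_lt_of_le hs with hs0 | hs0
  · right; rw [← hs0] at hst; rw [← hs0]; simp [hst.symm]
    rw [show t = 1 by linarith]; simp
  rcases eq_or_lt_of_le ht with ht0 | ht0
  · left; rw [← ht0] at hst; rw [← ht0]; simp
    rw [show s = 1 by linarith]; simp
  exfalso
  have := norm_combo_lt_of_ne hC hD hCD hs0 ht0 hst
  rw [hn] at this; exact lt_irrefl 1 this
lemma det2_smul_combo (u z w : ℂ) (s t : ℝ) :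
    det2 u (s • z + t • w) = s * det2 u z + t * det2 u w := by
  simp only [det2, Complex.real_smul, Complex.add_re, Complex.add_im,
    Complex.re_ofReal_mul, Complex.im_ofReal_mul]
  ring

lemma exists_ts {lc ld : ℝ} (hlc : lc < 0) (hld : 0 < ld) :
    ∃ ts : ℝ, 0 < ts ∧ ts < 1 ∧ (1 - ts) * lc + ts * ld = 0 := by
  have hden : lc - ld < 0 := by linarith
  have hne : lc - ld ≠ 0 := ne_of_lt hden
  refine ⟨lc / (lc - ld), div_pos_of_neg_of_neg hlc hden, ?_, ?_⟩
  · have h' : lc / (lc - ld) - 1 = ld / (lc - ld) := by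
      field_simp; ring
    have h2 : ld / (lc - ld) < 0 := div_neg_of_pos_of_neg hld hden
    linarith
  · field_simp
    ring

lemma solve2 {ur ui pr pi : ℝ} (hdet : ur * pi - ui * pr = 0) (hne : ur * ur + ui * ui ≠ 0) :
    ∃ rr : ℝ, pr = rr * ur ∧ pi = rr * ui := by
  refine ⟨(ur * pr + ui * pi) / (ur * ur + ui * ui), ?_, ?_⟩
  · rw [div_mul_eq_mul_div, eq_div_iff hne]
    linear_combination (-ui) * hdet
  · rw [div_mul_eq_mul_div, eq_div_iff hne]
    linear_combination ur * hdet

lemma combo_seg {A B P : ℂ} (hA : ‖A‖ = 1) (hB : ‖B‖ = 1) (hP : ‖P‖ ≤ 1) (hAB : A ≠ B)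
    (hPA : P ≠ A) (hPB : P ≠ B) (rr : ℝ) (hPr : P = (1 - rr) • A + rr • B) :
    P ∈ segment ℝ A B ∧ ‖P‖ < 1 := by
  by_cases h1 : rr < 0
  · exfalso
    have h1r : (1 : ℝ) - rr ≠ 0 := by intro h; linarith [h]
    have h1c : (1 : ℂ) - (rr : ℂ) ≠ 0 := by
      intro h
      apply h1r
      exact_mod_cast h
    have hcomb : A = (1 / (1 - rr)) • P + (-rr / (1 - rr)) • B := by
      rw [hPr]
      simp only [Complex.real_smul]
      push_cast
      field_simp; ring
    have hlt := norm_combo_lt_of_ne hP hB.le hPB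
      (div_pos one_pos (by linarith) : (0:ℝ) < 1 / (1 - rr))
      (by apply div_pos <;> linarith : (0:ℝ) < -rr / (1 - rr))
      (by field_simp; ring)
    rw [← hcomb, hA] at hlt
    linarith
  by_cases h2 : 1 < rr
  · exfalso
    have hrr0 : (0:ℝ) < rr := by linarith
    have hrrc : (rr : ℂ) ≠ 0 := by
      intro h
      have : rr = 0 := by exact_mod_cast h
      linarith
    have hcomb : B = (1 - 1 / rr) • A + (1 / rr) • P := by
      rw [hPr]
      simp only [Complex.real_smul]
      push_cast
      field_simp
      ring
    have hAP : A ≠ P := Ne.symm hPA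
    have hlt := norm_combo_lt_of_ne hA.le hP hAP
      (by rw [sub_pos, div_lt_one hrr0]; linarith : (0:ℝ) < 1 - 1 / rr)
      (div_pos one_pos hrr0 : (0:ℝ) < 1 / rr)
      (by field_simp; ring)
    rw [← hcomb, hB] at hlt
    linarith
  push_neg at h1 h2
  have hrr0 : rr ≠ 0 := by
    intro h; apply hPA; rw [hPr, h]; simp
  have hrr1 : rr ≠ 1 := by
    intro h; apply hPB; rw [hPr, h]; simp
  have hr0 : (0:ℝ) < rr := lt_of_le_of_ne h1 (Ne.symm hrr0)
  have hr1 : rr < 1 := lt_of_le_of_ne h2 hrr1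
  refine ⟨⟨1 - rr, rr, by linarith, h1, by ring, hPr.symm⟩, ?_⟩
  have hlt := norm_combo_lt_of_ne hA.le hB.le hAB
    (by linarith : (0:ℝ) < 1 - rr) hr0 (by ring)
  rw [← hPr] at hlt
  exact hlt

lemma seg_cross {A B C D : ℂ} (hA : ‖A‖ = 1) (hB : ‖B‖ = 1) (hC : ‖C‖ = 1) (hD : ‖D‖ = 1)
    (hAB : A ≠ B) (hlc : det2 (B - A) (C - A) < 0) (hld : 0 < det2 (B - A) (D - A)) :
    ∃ z, z ∈ segment ℝ A B ∧ z ∈ segment ℝ C D ∧ ‖z‖ < 1 := by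
  have hden : det2 (B - A) (C - A) - det2 (B - A) (D - A) < 0 := by linarith
  obtain ⟨ts, hts0, hts1, htszero⟩ := exists_ts hlc hld
  obtain ⟨P, hPdef⟩ : ∃ P : ℂ, P = (1 - ts) • C + ts • D := ⟨_, rfl⟩
  have hPseg : P ∈ segment ℝ C D := ⟨1 - ts, ts, by linarith, le_of_lt hts0, by ring, hPdef.symm⟩
  have hPnorm : ‖P‖ ≤ 1 := by
    rw [hPdef]
    calc ‖(1 - ts) • C + ts • D‖ ≤ ‖(1 - ts) • C‖ + ‖ts • D‖ := norm_add_le _ _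
      _ = |1 - ts| * ‖C‖ + |ts| * ‖D‖ := by rw [norm_smul, norm_smul]; simp [Real.norm_eq_abs]
      _ = (1 - ts) + ts := by
          rw [hC, hD, abs_of_nonneg (by linarith : (0:ℝ) ≤ 1 - ts),
            abs_of_nonneg (le_of_lt hts0)]; ring
      _ = 1 := by ring
  have hPA' : P - A = (1 - ts) • (C - A) + ts • (D - A) := by
    rw [hPdef]
    simp only [Complex.real_smul]
    push_cast
    ring
  have hLP : det2 (B - A) (P - A) = 0 := by
    rw [hPA', det2_smul_combo]
    exact htszero
  have hu0 : B - A ≠ 0 := sub_ne_zero.2 (Ne.symm hAB)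
  have hn : 0 < Complex.normSq (B - A) := Complex.normSq_pos.2 hu0
  have hnsq : Complex.normSq (B - A)
      = (B - A).re * (B - A).re + (B - A).im * (B - A).im := rfl
  have hne : (B - A).re * (B - A).re + (B - A).im * (B - A).im ≠ 0 := by
    rw [← hnsq]; exact ne_of_gt hn
  have hdet0 : (B - A).re * (P - A).im - (B - A).im * (P - A).re = 0 := hLP
  obtain ⟨rr, hre, him⟩ := solve2 hdet0 hne
  have hpru : P - A = rr • (B - A) := by
    apply Complex.ext
    · simp only [Complex.real_smul, Complex.re_ofReal_mul]
      exact hre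
    · simp only [Complex.real_smul, Complex.im_ofReal_mul]
      exact him
  have hPr : P = (1 - rr) • A + rr • B := by
    have h' : P = A + rr • (B - A) := by rw [← hpru]; ring
    rw [h']
    simp only [Complex.real_smul]
    push_cast
    ring
  have hPA : P ≠ A := by
    intro h
    have hmem : A ∈ segment ℝ C D := h ▸ hPseg
    rcases extreme_of_norm_one hmem hC.le hD.le hA with h' | h'
    · rw [← h'] at hlc
      have : det2 (B - A) (A - A) = 0 := by unfold det2; simp
      linarith [this ▸ hlc]
    · rw [← h'] at hld
      have : det2 (B - A) (A - A) = 0 := by unfold det2; simp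
      linarith [this ▸ hld]
  have hPB : P ≠ B := by
    intro h
    have hmem : B ∈ segment ℝ C D := h ▸ hPseg
    rcases extreme_of_norm_one hmem hC.le hD.le hB with h' | h'
    · rw [← h'] at hlc
      have : det2 (B - A) (B - A) = 0 := by unfold det2; ring
      linarith [this ▸ hlc]
    · rw [← h'] at hld
      have : det2 (B - A) (B - A) = 0 := by unfold det2; ring
      linarith [this ▸ hld]
  obtain ⟨hseg, hlt⟩ := combo_seg hA hB hPnorm hAB hPA hPB rr hPr
  exact ⟨P, hseg, hPseg, hlt⟩

lemma sin_pos_Ioo {t : ℝ} (h : t ∈ Ioo (0:ℝ) 1) : 0 < Real.sin (Real.pi * t) :=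
  Real.sin_pos_of_pos_of_lt_pi (mul_pos Real.pi_pos h.1)
    (by nlinarith [Real.pi_pos, h.2])

lemma cross_core (v : S1) {a b c : ℝ} (ha : a ∈ Ioo (0:ℝ) 1) (hb : b ∈ Ioo (0:ℝ) 1)
    (hc : c ∈ Ioo (0:ℝ) 1) (hba : b < a) (hac : a < c) :
    Crosses (chord v (v + ((a:ℝ):S1))) (chord (v + ((b:ℝ):S1)) (v + ((c:ℝ):S1))) ∧
      chord v (v + ((a:ℝ):S1)) ≠ chord (v + ((b:ℝ):S1)) (v + ((c:ℝ):S1)) := by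
  have hA : ‖pt v‖ = 1 := norm_pt v
  have hB : ‖pt (v + ((a:ℝ):S1))‖ = 1 := norm_pt _
  have hC : ‖pt (v + ((b:ℝ):S1))‖ = 1 := norm_pt _
  have hD : ‖pt (v + ((c:ℝ):S1))‖ = 1 := norm_pt _
  have hAB : pt v ≠ pt (v + ((a:ℝ):S1)) := by
    intro h
    exact coe_ne_zero_of_Ioo ha (left_eq_add.mp (pt_inj h))
  have hsa := sin_pos_Ioo ha
  have hsb := sin_pos_Ioo hb
  have hsc := sin_pos_Ioo hc
  have hlc : det2 (pt (v + ((a:ℝ):S1)) - pt v) (pt (v + ((b:ℝ):S1)) - pt v) < 0 := by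
    rw [det_pt]
    have hneg : Real.sin (Real.pi * (b - a)) < 0 :=
      Real.sin_neg_of_neg_of_neg_pi_lt
        (mul_neg_of_pos_of_neg Real.pi_pos (by linarith))
        (by nlinarith [Real.pi_pos, hb.1, ha.2])
    have hm := mul_neg_of_pos_of_neg (mul_pos hsa hsb) hneg
    nlinarith [hm]
  have hld : 0 < det2 (pt (v + ((a:ℝ):S1)) - pt v) (pt (v + ((c:ℝ):S1)) - pt v) := by
    rw [det_pt]
    have hpos : 0 < Real.sin (Real.pi * (c - a)) :=
      Real.sin_pos_of_pos_of_lt_pi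
        (mul_pos Real.pi_pos (by linarith))
        (by nlinarith [Real.pi_pos, hc.2, ha.1])
    positivity
  obtain ⟨z, h1, h2, h3⟩ := seg_cross hA hB hC hD hAB hlc hld
  constructor
  · exact ⟨z, h1, h2, by exact h3⟩
  · intro h
    have hmem : pt (v + ((b:ℝ):S1)) ∈ chord v (v + ((a:ℝ):S1)) := by
      rw [h]; exact left_mem_segment ℝ _ _
    rcases extreme_of_norm_one hmem hA.le hB.le hC with h' | h'
    · exact coe_ne_zero_of_Ioo hb (left_eq_add.mp (pt_inj h'.symm))
    · have := rep_unique hb.1.le hb.2 ha.1.le ha.2 (pt_inj h')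
      exact absurd this (ne_of_lt hba)

lemma no_cross {d : ℕ} (L : Geolam d) (v : S1) {a t₁ t₂ : ℝ} (ha : a ∈ Ioo (0:ℝ) 1)
    (h₁ : t₁ ∈ Ioo (0:ℝ) 1) (h₂ : t₂ ∈ Ioo (0:ℝ) 1)
    (hl : (v, v + ((a:ℝ):S1)) ∈ L.leaves)
    (hq : (v + ((t₁:ℝ):S1), v + ((t₂:ℝ):S1)) ∈ L.leaves)
    (hconf : t₁ < a ∧ a < t₂ ∨ t₂ < a ∧ a < t₁) : False := by
  rcases hconf with ⟨hc1, hc2⟩ | ⟨hc1, hc2⟩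
  · obtain ⟨hcr, hne⟩ := cross_core v ha h₁ h₂ hc1 hc2
    rcases L.unlinked _ hl _ hq with he | hnc
    · exact hne he
    · exact hnc hcr
  · have hq' := L.symm _ hq
    obtain ⟨hcr, hne⟩ := cross_core v ha h₂ h₁ hc1 hc2
    rcases L.unlinked _ hl _ hq' with he | hnc
    · exact hne he
    · exact hnc hcr


lemma sig_shift (d : ℕ) (z : S1) (r : ℝ) :
    sig d (z + ((r:ℝ):S1)) = sig d z + (((d:ℝ) * r : ℝ) : S1) := by
  rw [sig_add, sig_coe]

lemma rep_tor {d : ℕ} {z w : S1} (h : sig d w = sig d z) :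
    ∃ t : ℝ, 0 ≤ t ∧ t < 1 ∧ w = z + ((t:ℝ):S1) ∧ (d:ℝ) * t = (⌊(d:ℝ)*t⌋ : ℝ) := by
  obtain ⟨t, ht0, ht1, htw⟩ := rep_exists z w
  refine ⟨t, ht0, ht1, htw, ?_⟩
  rw [htw, sig_shift] at h
  have h0 : (((d:ℝ) * t : ℝ) : S1) = 0 := by
    have := add_eq_left.mp h
    exact this
  have hf := (coe_eq_zero_iff_fract _).1 h0
  have := Int.self_sub_floor ((d:ℝ)*t)
  rw [hf] at this
  linarith

lemma pt_mem_chord_left (a b : S1) : pt a ∈ chord a b := left_mem_segment ℝ _ _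

lemma pt_mem_chord_right (a b : S1) : pt b ∈ chord a b := right_mem_segment ℝ _ _

lemma sib_family {d : ℕ} (hd : 2 ≤ d) (L : Geolam d) {p : S1 × S1} (hp : p ∈ L.leaves)
    (hnd : sig d p.1 ≠ sig d p.2) :
    ∃ f : Fin d → S1 × S1, (∃ i, f i = p) ∧ (∀ i, f i ∈ L.leaves) ∧
      (∀ i, sig d (f i).1 = sig d p.1 ∧ sig d (f i).2 = sig d p.2) ∧
      (∀ i j, i ≠ j → Disjoint (chord (f i).1 (f i).2) (chord (f j).1 (f j).2)) ∧
      (∀ w : S1, sig d w = sig d p.1 → ∃ i, (f i).1 = w) := by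
  obtain ⟨f, hfi, hfl, hfs, hfd⟩ := L.sibling p hp hnd
  refine ⟨f, hfi, hfl, hfs, hfd, ?_⟩
  have hdr : (0:ℝ) < (d:ℝ) := by positivity
  have hfirst : ∀ i j, (f i).1 = (f j).1 → i = j := by
    intro i j hij
    by_contra hne
    have hdisj := hfd i j hne
    exact Set.disjoint_left.mp hdisj (pt_mem_chord_left _ _)
      (hij ▸ pt_mem_chord_left (f j).1 (f j).2)
  -- coordinates of the first endpoints
  have hrep : ∀ i, ∃ t : ℝ, 0 ≤ t ∧ t < 1 ∧ (f i).1 = p.1 + ((t:ℝ):S1) ∧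
      (d:ℝ) * t = (⌊(d:ℝ)*t⌋ : ℝ) := fun i => rep_tor ((hfs i).1)
  choose t ht0 ht1 htw htint using hrep
  have hKbound : ∀ i, 0 ≤ ⌊(d:ℝ) * t i⌋ ∧ ⌊(d:ℝ) * t i⌋ < (d:ℤ) := by
    intro i
    constructor
    · apply Int.floor_nonneg.mpr
      exact mul_nonneg (by positivity) (ht0 i)
    · apply Int.floor_lt.mpr
      push_cast
      nlinarith [ht1 i, ht0 i]
  have htinj : ∀ i j, t i = t j → i = j := by
    intro i j hij
    apply hfirst
    rw [htw i, htw j, hij]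
  set e : Fin d → Fin d := fun i => ⟨(⌊(d:ℝ) * t i⌋).toNat, by
    have h1 := (hKbound i).1
    have h2 := (hKbound i).2
    omega⟩ with he
  have hinj : Function.Injective e := by
    intro i j hij
    have h1 : (⌊(d:ℝ) * t i⌋).toNat = (⌊(d:ℝ) * t j⌋).toNat := congrArg Fin.val hij
    have h2 : ⌊(d:ℝ) * t i⌋ = ⌊(d:ℝ) * t j⌋ := by
      have := (hKbound i).1
      have := (hKbound j).1
      omega
    apply htinj
    have h3 : (d:ℝ) * t i = (d:ℝ) * t j := by
      rw [htint i, htint j, h2]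
    exact mul_left_cancel₀ (ne_of_gt hdr) h3
  have hsurj : Function.Surjective e := Finite.injective_iff_surjective.mp hinj
  intro w hw
  obtain ⟨s, hs0, hs1, hsw, hsint⟩ := rep_tor (z := p.1) hw
  have hkb : 0 ≤ ⌊(d:ℝ) * s⌋ ∧ ⌊(d:ℝ) * s⌋ < (d:ℤ) := by
    constructor
    · apply Int.floor_nonneg.mpr
      exact mul_nonneg (by positivity) hs0
    · apply Int.floor_lt.mpr
      push_cast
      nlinarith
  obtain ⟨i, hi⟩ := hsurj ⟨(⌊(d:ℝ) * s⌋).toNat, by omega⟩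
  have h1 : (⌊(d:ℝ) * t i⌋).toNat = (⌊(d:ℝ) * s⌋).toNat := congrArg Fin.val hi
  have h2 : ⌊(d:ℝ) * t i⌋ = ⌊(d:ℝ) * s⌋ := by
    have := (hKbound i).1
    omega
  have h3 : t i = s := by
    have h4 : (d:ℝ) * t i = (d:ℝ) * s := by rw [htint i, hsint, h2]
    exact mul_left_cancel₀ (ne_of_gt hdr) h4
  exact ⟨i, by rw [htw i, h3, ← hsw]⟩

lemma transport1 {d : ℕ} (hd : 2 ≤ d) (L : Geolam d) {p : S1 × S1} (hp : p ∈ L.leaves)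
    (hnd : sig d p.1 ≠ sig d p.2) {w : S1} (hw : sig d w = sig d p.1) :
    ∃ c, (w, c) ∈ L.leaves ∧ sig d c = sig d p.2 := by
  obtain ⟨f, -, hfl, hfs, -, hex⟩ := sib_family hd L hp hnd
  obtain ⟨i, hi⟩ := hex w hw
  refine ⟨(f i).2, ?_, (hfs i).2⟩
  rw [← hi]
  exact hfl i

lemma fwdN {d : ℕ} (L : Geolam d) (n : ℕ) {p : S1 × S1} (hp : p ∈ L.leaves) :
    ((sig d)^[n] p.1, (sig d)^[n] p.2) ∈ L.leaves := by
  induction n with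
  | zero => simpa using hp
  | succ n ih =>
      rw [Function.iterate_succ_apply', Function.iterate_succ_apply']
      exact L.fwd _ ih

lemma bwdN {d : ℕ} (L : Geolam d) (n : ℕ) {p : S1 × S1} (hp : p ∈ L.leaves) :
    ∃ q ∈ L.leaves, (sig d)^[n] q.1 = p.1 ∧ (sig d)^[n] q.2 = p.2 := by
  induction n with
  | zero => exact ⟨p, hp, rfl, rfl⟩
  | succ n ih =>
      obtain ⟨q1, hq1, hq1a, hq1b⟩ := ih
      obtain ⟨q, hq, hqe⟩ := L.bwd _ hq1
      refine ⟨q, hq, ?_, ?_⟩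
      · rw [Function.iterate_succ_apply]
        have : sig d q.1 = q1.1 := by rw [← hqe]
        rw [this, hq1a]
      · rw [Function.iterate_succ_apply]
        have : sig d q.2 = q1.2 := by rw [← hqe]
        rw [this, hq1b]

lemma transportN {d : ℕ} (hd : 2 ≤ d) (L : Geolam d) (n : ℕ) :
    ∀ p : S1 × S1, p ∈ L.leaves → (sig d)^[n] p.1 ≠ (sig d)^[n] p.2 →
      ∀ w, (sig d)^[n] w = (sig d)^[n] p.1 →
        ∃ c, (w, c) ∈ L.leaves ∧ (sig d)^[n] c = (sig d)^[n] p.2 := by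
  induction n with
  | zero =>
      intro p hp _ w hw
      simp only [Function.iterate_zero_apply] at hw ⊢
      exact ⟨p.2, by rw [hw]; simpa using hp, rfl⟩
  | succ n ih =>
      intro p hp hnd w hw
      have hp' : (sig d p.1, sig d p.2) ∈ L.leaves := L.fwd p hp
      have hnd' : (sig d)^[n] (sig d p.1) ≠ (sig d)^[n] (sig d p.2) := by
        rw [← Function.iterate_succ_apply, ← Function.iterate_succ_apply]
        exact hnd
      have hu : (sig d)^[n] (sig d w) = (sig d)^[n] (sig d p.1) := by
        rw [← Function.iterate_succ_apply, ← Function.iterate_succ_apply]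
        exact hw
      obtain ⟨c', hc'l, hc'i⟩ := ih (sig d p.1, sig d p.2) hp' hnd' (sig d w) hu
      obtain ⟨q, hq, hqe⟩ := L.bwd _ hc'l
      have hq1 : sig d q.1 = sig d w := by rw [show sig d q.1 = (sig d w, c').1 from by rw [← hqe]]
      have hq2 : sig d q.2 = c' := by rw [show sig d q.2 = (sig d w, c').2 from by rw [← hqe]]
      have hqnd : sig d q.1 ≠ sig d q.2 := by
        rw [hq1, hq2]
        intro h
        apply hnd'
        rw [← hu, h, hc'i]
      obtain ⟨c, hcl, hci⟩ := transport1 hd L hq hqnd (w := w) (by rw [hq1])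
      refine ⟨c, hcl, ?_⟩
      rw [Function.iterate_succ_apply, Function.iterate_succ_apply, hci, hq2, hc'i]


lemma fract_ne_zero_imp {d : ℕ} {r : ℝ} (h : Int.fract ((d:ℝ) * r) ≠ 0) (v : S1) :
    sig d v ≠ sig d (v + ((r:ℝ):S1)) := by
  rw [sig_shift]
  intro hcon
  have h0 : ((((d:ℝ) * r : ℝ)) : S1) = 0 := (left_eq_add.mp hcon)
  exact h ((coe_eq_zero_iff_fract _).1 h0)

lemma coe_zero_S1 : (((0:ℝ)) : S1) = 0 := by norm_num

lemma osl {d : ℕ} (hd : 2 ≤ d) (L : Geolam d) (v : S1) {a b : ℝ}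
    (ha : a ∈ Ioo (0:ℝ) 1) (hb : b ∈ Ioo (0:ℝ) 1) (hab : a < b)
    (hla : (v, v + ((a:ℝ):S1)) ∈ L.leaves) (hlb : (v, v + ((b:ℝ):S1)) ∈ L.leaves)
    (hfa : Int.fract ((d:ℝ) * a) ≠ 0) (hfb : Int.fract ((d:ℝ) * b) ≠ 0)
    (hfab : Int.fract ((d:ℝ) * a) ≠ Int.fract ((d:ℝ) * b)) :
    Int.fract ((d:ℝ) * a) < Int.fract ((d:ℝ) * b) := by
  have hdr : (0:ℝ) < (d:ℝ) := by positivity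
  by_contra hcon
  push_neg at hcon
  have hrev : Int.fract ((d:ℝ) * b) < Int.fract ((d:ℝ) * a) :=
    lt_of_le_of_ne hcon (fun h => hfab h.symm)
  have e1 : (d:ℝ)*a - ⌊(d:ℝ)*a⌋ = Int.fract ((d:ℝ)*a) := Int.self_sub_floor _
  have e2 : (d:ℝ)*b - ⌊(d:ℝ)*b⌋ = Int.fract ((d:ℝ)*b) := Int.self_sub_floor _
  have hfa0 := Int.fract_nonneg ((d:ℝ)*a)
  have hfa1 := Int.fract_lt_one ((d:ℝ)*a)
  have hfb0 := Int.fract_nonneg ((d:ℝ)*b)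
  have hfb1 := Int.fract_lt_one ((d:ℝ)*b)
  have hfl : ⌊(d:ℝ)*b - (d:ℝ)*a⌋ = ⌊(d:ℝ)*b⌋ - ⌊(d:ℝ)*a⌋ - 1 := by
    apply Int.floor_eq_iff.mpr
    constructor
    · push_cast
      linarith
    · push_cast
      linarith
  have hge1 : 1 ≤ ⌊(d:ℝ)*b⌋ - ⌊(d:ℝ)*a⌋ := by
    have h0 : 0 ≤ ⌊(d:ℝ)*b - (d:ℝ)*a⌋ := Int.floor_nonneg.mpr (by nlinarith)
    omega
  have hnd : sig d (v, v + ((a:ℝ):S1)).1 ≠ sig d (v, v + ((a:ℝ):S1)).2 :=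
    fract_ne_zero_imp hfa v
  obtain ⟨f, ⟨i₀, hi₀⟩, hfleaf, hfs, hfd, hex⟩ := sib_family hd L hla hnd
  have hrep2 : ∀ i, ∃ s : ℝ, 0 ≤ s ∧ s < 1 ∧ (f i).2 = v + ((s:ℝ):S1) :=
    fun i => rep_exists v (f i).2
  choose ψ hψ0 hψ1 hψw using hrep2
  have hsig2 : ∀ i, sig d v + ((((d:ℝ) * ψ i :ℝ)) : S1) = sig d v + ((((d:ℝ) * a :ℝ)) : S1) := by
    intro i
    have h1 := (hfs i).2
    rw [hψw i] at h1
    rw [sig_shift] at h1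
    rw [show sig d (v, v + ((a:ℝ):S1)).2 = sig d (v + ((a:ℝ):S1)) from rfl, sig_shift] at h1
    exact h1
  have hψint : ∀ i, (d:ℝ) * ψ i - (d:ℝ) * a = (⌊(d:ℝ) * ψ i - (d:ℝ) * a⌋ : ℝ) := by
    intro i
    have h1 := add_left_cancel (hsig2 i)
    have h2 : ((((d:ℝ) * ψ i - (d:ℝ) * a :ℝ)) : S1) = 0 := by
      rw [AddCircle.coe_sub, h1]
      simp
    have h3 := (coe_eq_zero_iff_fract _).1 h2
    have h4 := Int.self_sub_floor ((d:ℝ) * ψ i - (d:ℝ) * a)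
    rw [h3] at h4
    linarith
  have hsecond : ∀ i j, (f i).2 = (f j).2 → i = j := by
    intro i j hij
    by_contra hne
    exact Set.disjoint_left.mp (hfd i j hne) (pt_mem_chord_right _ _)
      (hij ▸ pt_mem_chord_right (f j).1 (f j).2)
  have key : ∀ (i : Fin d) (k : ℤ), (f i).1 = v + ((((k:ℝ)/(d:ℝ)) : ℝ) : S1) →
      (d:ℝ)*a < (k:ℝ) → (k:ℝ) < (d:ℝ)*b → a < ψ i ∧ ψ i < b := by
    intro i k hik hka hkb
    have hkd1 : a < (k:ℝ)/(d:ℝ) := by rw [lt_div_iff₀ hdr]; linarith [hka]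
    have hkd2 : (k:ℝ)/(d:ℝ) < b := by rw [div_lt_iff₀ hdr]; linarith [hkb]
    have hkd01 : (k:ℝ)/(d:ℝ) ∈ Ioo (0:ℝ) 1 := ⟨lt_trans ha.1 hkd1, lt_trans hkd2 hb.2⟩
    have hψne0 : ψ i ≠ 0 := by
      intro h0
      apply fract_ne_zero_imp hfa v
      have h1 := (hfs i).2
      rw [hψw i, h0, coe_zero_S1, add_zero] at h1
      exact h1
    have hψnea : ψ i ≠ a := by
      intro h0
      have h1 : (f i).2 = (f i₀).2 := by
        rw [hψw i, h0, hi₀]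
      have h2 := hsecond i i₀ h1
      have h3 : (f i).1 = v := by rw [h2, hi₀]
      rw [hik] at h3
      exact coe_ne_zero_of_Ioo hkd01 (left_eq_add.mp h3.symm)
    have hψneb : ψ i ≠ b := by
      intro h0
      have h1 := hsig2 i
      rw [h0] at h1
      have h2 := add_left_cancel h1
      have h3 : ((((d:ℝ) * b - (d:ℝ) * a :ℝ)) : S1) = 0 := by
        rw [AddCircle.coe_sub, h2]
        simp
      have h4 := (coe_eq_zero_iff_fract _).1 h3
      have h5 := Int.self_sub_floor ((d:ℝ)*b - (d:ℝ)*a)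
      rw [h4] at h5
      exact hfab (Int.fract_eq_fract.mpr ⟨-⌊(d:ℝ)*b - (d:ℝ)*a⌋, by push_cast; linarith⟩)
    have hψIoo : ψ i ∈ Ioo (0:ℝ) 1 := ⟨lt_of_le_of_ne (hψ0 i) (Ne.symm hψne0), hψ1 i⟩
    constructor
    · rcases lt_trichotomy (ψ i) a with h | h | h
      · exfalso
        refine no_cross L v ha hkd01 hψIoo hla ?_ (Or.inr ⟨h, hkd1⟩)
        rw [← hik, ← hψw i]
        exact hfleaf i
      · exact absurd h hψnea
      · exact h
    · rcases lt_trichotomy (ψ i) b with h | h | h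
      · exact h
      · exact absurd h hψneb
      · exfalso
        refine no_cross L v hb hkd01 hψIoo hlb ?_ (Or.inl ⟨hkd2, h⟩)
        rw [← hik, ← hψw i]
        exact hfleaf i
  have hexk : ∀ k : ℤ, ∃ i, (f i).1 = v + ((((k:ℝ)/(d:ℝ)):ℝ) : S1) := by
    intro k
    apply hex
    rw [sig_shift]
    rw [show sig d (v, v + ((a:ℝ):S1)).1 = sig d v from rfl]
    rw [mul_div_cancel₀ _ (ne_of_gt hdr)]
    rw [show ((((k:ℝ)):ℝ):S1) = 0 from coe_int_zero k]
    rw [add_zero]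
  choose ind hind using hexk
  have hbnd : ∀ k ∈ Finset.Icc (⌊(d:ℝ)*a⌋+1) ⌊(d:ℝ)*b⌋,
      (d:ℝ)*a < (k:ℝ) ∧ (k:ℝ) < (d:ℝ)*b := by
    intro k hk
    rw [Finset.mem_Icc] at hk
    constructor
    · have h1 := Int.lt_floor_add_one ((d:ℝ)*a)
      have hc : ((⌊(d:ℝ)*a⌋+1 : ℤ):ℝ) ≤ (k:ℝ) := by exact_mod_cast hk.1
      push_cast at hc
      linarith
    · have hc : (k:ℝ) ≤ ((⌊(d:ℝ)*b⌋:ℤ):ℝ) := by exact_mod_cast hk.2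
      have hfl2 : ((⌊(d:ℝ)*b⌋:ℤ):ℝ) ≤ (d:ℝ)*b := Int.floor_le _
      have hstrict : ((⌊(d:ℝ)*b⌋:ℤ):ℝ) < (d:ℝ)*b := by
        rcases lt_or_eq_of_le hfl2 with h | h
        · exact h
        · exfalso
          apply hfb
          linarith
      linarith
  have hmaps : ∀ k ∈ Finset.Icc (⌊(d:ℝ)*a⌋+1) ⌊(d:ℝ)*b⌋,
      ⌊(d:ℝ) * ψ (ind k) - (d:ℝ) * a⌋ ∈ Finset.Icc (1:ℤ) ⌊(d:ℝ)*b - (d:ℝ)*a⌋ := by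
    intro k hk
    obtain ⟨hka, hkb⟩ := hbnd k hk
    obtain ⟨hψa, hψb⟩ := key (ind k) k (hind k) hka hkb
    rw [Finset.mem_Icc]
    constructor
    · have h1 : (0:ℝ) < (d:ℝ) * ψ (ind k) - (d:ℝ)*a := by nlinarith
      have h2 : (0:ℝ) < (⌊(d:ℝ) * ψ (ind k) - (d:ℝ)*a⌋:ℝ) := by
        rw [← hψint (ind k)]
        exact h1
      have h3 : (0:ℤ) < ⌊(d:ℝ) * ψ (ind k) - (d:ℝ)*a⌋ := by exact_mod_cast h2
      omega
    · apply Int.le_floor.mpr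
      have h1 : (d:ℝ) * ψ (ind k) - (d:ℝ)*a ≤ (d:ℝ)*b - (d:ℝ)*a := by nlinarith
      calc ((⌊(d:ℝ) * ψ (ind k) - (d:ℝ)*a⌋:ℤ):ℝ)
          = (d:ℝ) * ψ (ind k) - (d:ℝ)*a := (hψint (ind k)).symm
        _ ≤ _ := h1
  have hinjon : Set.InjOn (fun k => ⌊(d:ℝ) * ψ (ind k) - (d:ℝ) * a⌋)
      ↑(Finset.Icc (⌊(d:ℝ)*a⌋+1) ⌊(d:ℝ)*b⌋) := by
    intro k hk k' hk' heq
    simp only at heq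
    have hk2 := hbnd k (by exact_mod_cast hk)
    have hk2' := hbnd k' (by exact_mod_cast hk')
    have hψeq : ψ (ind k) = ψ (ind k') := by
      have h1 := hψint (ind k)
      have h2 := hψint (ind k')
      have h3 : (d:ℝ) * ψ (ind k) - (d:ℝ)*a = (d:ℝ) * ψ (ind k') - (d:ℝ)*a := by
        rw [h1, h2, heq]
      have h4 : (d:ℝ) * ψ (ind k) = (d:ℝ) * ψ (ind k') := by linarith
      exact mul_left_cancel₀ (ne_of_gt hdr) h4
    have hieq : ind k = ind k' :=
      hsecond _ _ (by rw [hψw (ind k), hψw (ind k'), hψeq])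
    have h1 : v + ((((k:ℝ)/(d:ℝ)):ℝ):S1) = v + ((((k':ℝ)/(d:ℝ)):ℝ):S1) := by
      rw [← hind k, ← hind k', hieq]
    have h2 := add_left_cancel h1
    have h3 : ((((k:ℝ)/(d:ℝ) - (k':ℝ)/(d:ℝ)):ℝ):S1) = 0 := by
      rw [AddCircle.coe_sub, h2]
      simp
    have h4 := (coe_eq_zero_iff_fract _).1 h3
    have h5 := Int.self_sub_floor ((k:ℝ)/(d:ℝ) - (k':ℝ)/(d:ℝ))
    rw [h4] at h5
    have hdiff : (k:ℝ)/(d:ℝ) - (k':ℝ)/(d:ℝ) = (⌊(k:ℝ)/(d:ℝ) - (k':ℝ)/(d:ℝ)⌋ : ℝ) := by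
      linarith
    have hub : (k:ℝ)/(d:ℝ) - (k':ℝ)/(d:ℝ) < 1 := by
      have q1 : (k:ℝ)/(d:ℝ) < b := by rw [div_lt_iff₀ hdr]; linarith [hk2.2]
      have q2 : a < (k':ℝ)/(d:ℝ) := by rw [lt_div_iff₀ hdr]; linarith [hk2'.1]
      linarith [ha.1, hb.2]
    have hlb2 : -1 < (k:ℝ)/(d:ℝ) - (k':ℝ)/(d:ℝ) := by
      have q1 : (k':ℝ)/(d:ℝ) < b := by rw [div_lt_iff₀ hdr]; linarith [hk2'.2]
      have q2 : a < (k:ℝ)/(d:ℝ) := by rw [lt_div_iff₀ hdr]; linarith [hk2.1]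
      linarith [ha.1, hb.2]
    have hm0 : ⌊(k:ℝ)/(d:ℝ) - (k':ℝ)/(d:ℝ)⌋ = 0 := by
      have hmu : ((⌊(k:ℝ)/(d:ℝ) - (k':ℝ)/(d:ℝ)⌋:ℤ):ℝ) < 1 := by rw [← hdiff]; exact hub
      have hml : (-1:ℝ) < ((⌊(k:ℝ)/(d:ℝ) - (k':ℝ)/(d:ℝ)⌋:ℤ):ℝ) := by rw [← hdiff]; exact hlb2
      have hmu' : ⌊(k:ℝ)/(d:ℝ) - (k':ℝ)/(d:ℝ)⌋ < 1 := by exact_mod_cast hmu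
      have hml' : (-1:ℤ) < ⌊(k:ℝ)/(d:ℝ) - (k':ℝ)/(d:ℝ)⌋ := by exact_mod_cast hml
      omega
    rw [hm0] at hdiff
    push_cast at hdiff
    have h6 : (k:ℝ)/(d:ℝ) = (k':ℝ)/(d:ℝ) := by linarith
    field_simp at h6
    exact_mod_cast h6
  have hcard := Finset.card_le_card_of_injOn _ hmaps hinjon
  rw [Int.card_Icc, Int.card_Icc, hfl] at hcard
  omega


lemma fract_mul_nat_zero {d : ℕ} {r : ℝ} (h : Int.fract r = 0) :
    Int.fract ((d:ℝ) * r) = 0 := by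
  have h1 := Int.self_sub_floor r
  rw [h] at h1
  have h2 : (d:ℝ) * r = (((d:ℤ) * ⌊r⌋ : ℤ) : ℝ) := by
    push_cast
    nlinarith [h1]
  rw [h2, Int.fract_intCast]

lemma fract_eq_mul_nat {d : ℕ} {r s : ℝ} (h : Int.fract r = Int.fract s) :
    Int.fract ((d:ℝ) * r) = Int.fract ((d:ℝ) * s) := by
  rcases Int.fract_eq_fract.mp h with ⟨z, hz⟩
  exact Int.fract_eq_fract.mpr ⟨(d:ℤ)*z, by push_cast; linear_combination (d:ℝ) * hz⟩

lemma fract_mul_fract (d : ℕ) (r : ℝ) :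
    Int.fract ((d:ℝ) * Int.fract r) = Int.fract ((d:ℝ) * r) := by
  apply Int.fract_eq_fract.mpr
  refine ⟨-((d:ℤ)*⌊r⌋), ?_⟩
  rw [Int.fract]
  push_cast
  ring

lemma chain {d : ℕ} (hd : 2 ≤ d) (L : Geolam d) (N : ℕ) (v : S1) {a b : ℝ}
    (ha : a ∈ Ioo (0:ℝ) 1) (hb : b ∈ Ioo (0:ℝ) 1) (hab : a < b)
    (hla : (v, v + ((a:ℝ):S1)) ∈ L.leaves) (hlb : (v, v + ((b:ℝ):S1)) ∈ L.leaves)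
    (hfa : Int.fract ((d:ℝ)^N * a) ≠ 0) (hfb : Int.fract ((d:ℝ)^N * b) ≠ 0)
    (hfab : Int.fract ((d:ℝ)^N * a) ≠ Int.fract ((d:ℝ)^N * b)) :
    Int.fract ((d:ℝ)^N * a) < Int.fract ((d:ℝ)^N * b) := by
  induction N with
  | zero =>
      rw [pow_zero, one_mul, one_mul, Int.fract_eq_self.2 ⟨le_of_lt ha.1, ha.2⟩,
        Int.fract_eq_self.2 ⟨le_of_lt hb.1, hb.2⟩]
      exact hab
  | succ N ih =>
      have hpa : (d:ℝ) * ((d:ℝ)^N * a) = (d:ℝ)^(N+1) * a := by ring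
      have hpb : (d:ℝ) * ((d:ℝ)^N * b) = (d:ℝ)^(N+1) * b := by ring
      have hfa' : Int.fract ((d:ℝ)^N * a) ≠ 0 := by
        intro h
        apply hfa
        rw [← hpa]
        exact fract_mul_nat_zero h
      have hfb' : Int.fract ((d:ℝ)^N * b) ≠ 0 := by
        intro h
        apply hfb
        rw [← hpb]
        exact fract_mul_nat_zero h
      have hfab' : Int.fract ((d:ℝ)^N * a) ≠ Int.fract ((d:ℝ)^N * b) := by
        intro h
        apply hfab
        rw [← hpa, ← hpb]
        exact fract_eq_mul_nat h
      have hlt := ih hfa' hfb' hfab'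
      have ha' : Int.fract ((d:ℝ)^N * a) ∈ Ioo (0:ℝ) 1 :=
        ⟨lt_of_le_of_ne (Int.fract_nonneg _) (Ne.symm hfa'), Int.fract_lt_one _⟩
      have hb' : Int.fract ((d:ℝ)^N * b) ∈ Ioo (0:ℝ) 1 :=
        ⟨lt_of_le_of_ne (Int.fract_nonneg _) (Ne.symm hfb'), Int.fract_lt_one _⟩
      have hla' : ((sig d)^[N] v,
          (sig d)^[N] v + ((Int.fract ((d:ℝ)^N * a) : ℝ) : S1)) ∈ L.leaves := by
        have h := fwdN L N hla
        rw [show ((v, v + ((a:ℝ):S1)).1) = v from rfl,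
          show ((v, v + ((a:ℝ):S1)).2) = v + ((a:ℝ):S1) from rfl] at h
        rw [sig_iter_add d N v a] at h
        rw [show ((((d:ℝ)^N * a :ℝ)):S1) = ((Int.fract ((d:ℝ)^N * a) : ℝ) : S1) from
          (coe_fract _).symm] at h
        exact h
      have hlb' : ((sig d)^[N] v,
          (sig d)^[N] v + ((Int.fract ((d:ℝ)^N * b) : ℝ) : S1)) ∈ L.leaves := by
        have h := fwdN L N hlb
        rw [show ((v, v + ((b:ℝ):S1)).1) = v from rfl,
          show ((v, v + ((b:ℝ):S1)).2) = v + ((b:ℝ):S1) from rfl] at h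
        rw [sig_iter_add d N v b] at h
        rw [show ((((d:ℝ)^N * b :ℝ)):S1) = ((Int.fract ((d:ℝ)^N * b) : ℝ) : S1) from
          (coe_fract _).symm] at h
        exact h
      have h1 := osl hd L ((sig d)^[N] v) ha' hb' hlt hla' hlb'
        (by rw [fract_mul_fract, hpa]; exact hfa)
        (by rw [fract_mul_fract, hpb]; exact hfb)
        (by rw [fract_mul_fract, fract_mul_fract, hpa, hpb]; exact hfab)
      rw [fract_mul_fract, fract_mul_fract, hpa, hpb] at h1
      exact h1


lemma cyc {d : ℕ} (hd : 2 ≤ d) (L : Geolam d) (u : S1) (M : ℕ)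
    (hu : (sig d)^[M] u = u) (z : S1) (hz : (u, z) ∈ L.leaves) (hzu : z ≠ u)
    (k : ℕ) (hk : 1 ≤ k) (hper : (sig d)^[M*k] z = z)
    (horb : ∀ j : ℕ, (sig d)^[M*j] z ≠ u) : (sig d)^[M] z = z := by
  have hzper : Function.IsPeriodicPt ((sig d)^[M]) k z := by
    show ((sig d)^[M])^[k] z = z
    rw [← Function.iterate_mul]
    exact hper
  have hzmem : z ∈ periodicPts ((sig d)^[M]) :=
    Function.mk_mem_periodicPts hk hzper
  set k₀ := minimalPeriod ((sig d)^[M]) z with hk₀def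
  have hk₀pos : 0 < k₀ := Function.minimalPeriod_pos_of_mem_periodicPts hzmem
  have hk₀per : ((sig d)^[M])^[k₀] z = z := Function.iterate_minimalPeriod
  rcases Nat.lt_or_ge k₀ 2 with hk₀1 | hk₀2
  · have hone : k₀ = 1 := by omega
    have h1 : ((sig d)^[M])^[1] z = z := by rw [← hone]; exact hk₀per
    simpa using h1
  exfalso
  set zj : ℕ → S1 := fun j => ((sig d)^[M])^[j] z with hzjdef
  have hzjmul : ∀ j, zj j = (sig d)^[M*j] z := by
    intro j
    rw [hzjdef]
    simp only
    rw [Function.iterate_mul]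
  have hzjne : ∀ j, zj j ≠ u := fun j => (hzjmul j) ▸ horb j
  have hstep : ∀ j, zj (j+1) = (sig d)^[M] (zj j) := by
    intro j
    rw [hzjdef]
    simp only
    rw [Function.iterate_succ_apply']
  have hwrap : zj k₀ = zj 0 := by
    rw [hzjdef]
    simp only [Function.iterate_zero_apply]
    exact hk₀per
  have hdist : ∀ i j, i < k₀ → j < k₀ → zj i = zj j → i = j := by
    have haux : ∀ i j, i < j → j < k₀ → zj i = zj j → False := by
      intro i j hij hj heq
      have h1 : zj (k₀ - j + i) = zj k₀ := by
        have e : k₀ = (k₀ - j) + j := by omega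
        calc zj (k₀ - j + i) = ((sig d)^[M])^[k₀-j] (zj i) := by
              rw [hzjdef]; simp only; rw [Function.iterate_add_apply]
          _ = ((sig d)^[M])^[k₀-j] (zj j) := by rw [heq]
          _ = zj ((k₀ - j) + j) := by
              rw [hzjdef]; simp only; rw [Function.iterate_add_apply]
          _ = zj k₀ := by rw [← e]
      rw [hwrap] at h1
      have hper2 : Function.IsPeriodicPt ((sig d)^[M]) (k₀ - j + i) z := h1
      have hle := Function.IsPeriodicPt.minimalPeriod_le (by omega) hper2
      rw [← hk₀def] at hle
      omega
    intro i j hi hj heq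
    rcases Nat.lt_trichotomy i j with h | h | h
    · exact absurd heq (fun he => haux i j h hj he)
    · exact h
    · exact absurd heq.symm (fun he => haux j i h hi he)
  have hleaf : ∀ j, (u, zj j) ∈ L.leaves := by
    intro j
    have h := fwdN L (M*j) hz
    rw [show ((u, z).1) = u from rfl, show ((u, z).2) = z from rfl] at h
    have hufix : (sig d)^[M*j] u = u := by
      rw [Function.iterate_mul]
      exact Function.IsFixedPt.iterate hu j
    rw [hufix, ← hzjmul j] at h
    exact h
  have hcoord : ∀ j, ∃ t : ℝ, 0 ≤ t ∧ t < 1 ∧ zj j = u + ((t:ℝ):S1) :=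
    fun j => rep_exists u (zj j)
  choose c hc0 hc1 hcw using hcoord
  have hcne0 : ∀ j, c j ≠ 0 := by
    intro j h0
    apply hzjne j
    rw [hcw j, h0, coe_zero_S1, add_zero]
  have hcIoo : ∀ j, c j ∈ Ioo (0:ℝ) 1 :=
    fun j => ⟨lt_of_le_of_ne (hc0 j) (Ne.symm (hcne0 j)), hc1 j⟩
  have hmodlt : ∀ i, i < k₀ → (i+1) % k₀ < k₀ := fun i _ => Nat.mod_lt _ (by omega)
  have hzjsucc : ∀ i, i < k₀ → zj ((i+1) % k₀) = (sig d)^[M] (zj i) := by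
    intro i hi
    rcases Nat.lt_or_ge (i+1) k₀ with h | h
    · rw [Nat.mod_eq_of_lt h, hstep]
    · have h2 : i + 1 = k₀ := by omega
      calc zj ((i+1) % k₀) = zj 0 := by rw [h2, Nat.mod_self]
        _ = zj k₀ := hwrap.symm
        _ = zj (i+1) := by rw [h2]
        _ = (sig d)^[M] (zj i) := hstep i
  have himg : ∀ i, i < k₀ →
      zj ((i+1) % k₀) = u + ((Int.fract ((d:ℝ)^M * c i) : ℝ) : S1) := by
    intro i hi
    rw [hzjsucc i hi, hcw i, sig_iter_add d M u (c i), hu, ← coe_fract]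
  have hcsucc : ∀ i, i < k₀ → c ((i+1) % k₀) = Int.fract ((d:ℝ)^M * c i) := by
    intro i hi
    apply rep_unique (hc0 _) (hc1 _) (Int.fract_nonneg _) (Int.fract_lt_one _)
    rw [← hcw ((i+1)%k₀), himg i hi]
  have hfne0 : ∀ i, i < k₀ → Int.fract ((d:ℝ)^M * c i) ≠ 0 := by
    intro i hi h0
    apply hzjne ((i+1)%k₀)
    rw [himg i hi, h0, coe_zero_S1, add_zero]
  have hmodinj : ∀ i j, i < k₀ → j < k₀ → (i+1)%k₀ = (j+1)%k₀ → i = j := by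
    intro i j hi hj hmod
    rcases Nat.lt_or_ge (i+1) k₀ with h | h <;> rcases Nat.lt_or_ge (j+1) k₀ with h' | h'
    · rw [Nat.mod_eq_of_lt h, Nat.mod_eq_of_lt h'] at hmod; omega
    · have hj1 : j+1 = k₀ := by omega
      rw [Nat.mod_eq_of_lt h, hj1, Nat.mod_self] at hmod; omega
    · have hi1 : i+1 = k₀ := by omega
      rw [hi1, Nat.mod_self, Nat.mod_eq_of_lt h'] at hmod; omega
    · omega
  have hmono : ∀ i j, i < k₀ → j < k₀ → c i < c j → c ((i+1)%k₀) < c ((j+1)%k₀) := by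
    intro i j hi hj hij
    rw [hcsucc i hi, hcsucc j hj]
    have hne : i ≠ j := fun h => by rw [h] at hij; exact lt_irrefl _ hij
    apply chain hd L M u (hcIoo i) (hcIoo j) hij ?_ ?_ (hfne0 i hi) (hfne0 j hj) ?_
    · rw [← hcw i]; exact hleaf i
    · rw [← hcw j]; exact hleaf j
    · intro hfeq
      have h1 : zj ((i+1)%k₀) = zj ((j+1)%k₀) := by rw [himg i hi, himg j hj, hfeq]
      exact hne (hmodinj i j hi hj (hdist _ _ (hmodlt i hi) (hmodlt j hj) h1))
  obtain ⟨m, hm, hmmin⟩ : ∃ m, m < k₀ ∧ ∀ j, j < k₀ → c m ≤ c j := by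
    have hne : (Finset.range k₀).Nonempty := ⟨0, Finset.mem_range.mpr (by omega)⟩
    obtain ⟨m, hmmem, hmin⟩ := Finset.exists_min_image (Finset.range k₀) c hne
    exact ⟨m, Finset.mem_range.mp hmmem, fun j hj => hmin j (Finset.mem_range.mpr hj)⟩
  obtain ⟨s, hs, hsm⟩ : ∃ s, s < k₀ ∧ (s+1) % k₀ = m := by
    rcases Nat.eq_zero_or_pos m with h0 | h0
    · exact ⟨k₀ - 1, by omega, by rw [show k₀ - 1 + 1 = k₀ by omega, Nat.mod_self, h0]⟩
    · exact ⟨m - 1, by omega, by rw [show m - 1 + 1 = m by omega, Nat.mod_eq_of_lt hm]⟩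
  rcases lt_or_eq_of_le (hmmin s hs) with hlt | heqc
  · have hlt2 := hmono m s hm hs hlt
    rw [hsm] at hlt2
    exact absurd (hmmin _ (hmodlt m hm)) (not_le.mpr hlt2)
  · have hzeq : zj s = zj m := by rw [hcw s, hcw m, ← heqc]
    have hsm2 := hdist s m hs hm hzeq
    rw [hsm2] at hsm
    rcases Nat.lt_or_ge (m+1) k₀ with h | h
    · rw [Nat.mod_eq_of_lt h] at hsm; omega
    · have hm1 : m + 1 = k₀ := by omega
      rw [hm1, Nat.mod_self] at hsm
      omega

end Scaffold

/-- if the cone of all leaves at a periodic vertex `v` is finite, then every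
point of its basis is periodic of the same period as `v`. -/
theorem stmt5 (d : ℕ) (hd : 2 ≤ d) (L : Geolam d) (v : S1)
    (hv : v ∈ periodicPts (sig d))
    (hfin : {x : S1 | x ≠ v ∧ (v, x) ∈ L.leaves}.Finite) :
    ∀ x : S1, x ≠ v → (v, x) ∈ L.leaves →
      x ∈ periodicPts (sig d) ∧ minimalPeriod (sig d) x = minimalPeriod (sig d) v := by
  intro x hxv hleaf
  have hN1 : 0 < minimalPeriod (sig d) v :=
    Function.minimalPeriod_pos_of_mem_periodicPts hv
  set N := minimalPeriod (sig d) v with hNdef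
  have hvN : (sig d)^[N] v = v := Function.iterate_minimalPeriod
  have hsurj : ∀ y, (v, y) ∈ L.leaves → ∃ w, (v, w) ∈ L.leaves ∧ (sig d)^[N] w = y := by
    intro y hy
    by_cases hyv : y = v
    · exact ⟨v, L.degen v, hvN.trans hyv.symm⟩
    · obtain ⟨q, hq, hq1, hq2⟩ := Scaffold.bwdN L N hy
      have hqnd : (sig d)^[N] q.1 ≠ (sig d)^[N] q.2 := by
        rw [hq1, hq2]
        exact fun h => hyv h.symm
      obtain ⟨c, hcl, hci⟩ := Scaffold.transportN hd L N q hq hqnd v (by rw [hq1, hvN])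
      exact ⟨c, hcl, by rw [hci, hq2]⟩
  have hSfin : {y : S1 | (v, y) ∈ L.leaves}.Finite := by
    apply Set.Finite.subset (hfin.insert v)
    intro y hy
    by_cases h : y = v
    · exact h ▸ Set.mem_insert _ _
    · exact Set.mem_insert_of_mem _ ⟨h, hy⟩
  have hFex : ∀ y : {y : S1 // (v, y) ∈ L.leaves},
      ∃ w : {y : S1 // (v, y) ∈ L.leaves}, (sig d)^[N] w.1 = y.1 := by
    intro y
    obtain ⟨w, hw1, hw2⟩ := hsurj y.1 y.2
    exact ⟨⟨w, hw1⟩, hw2⟩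
  choose F hF using hFex
  have hsub : Finite {y : S1 // (v, y) ∈ L.leaves} := hSfin.to_subtype
  set seq : ℕ → {y : S1 // (v, y) ∈ L.leaves} := fun j => F^[j] ⟨x, hleaf⟩ with hseqdef
  have hFiter2 : ∀ k a, (sig d)^[N*a] (seq (k+a)).1 = (seq k).1 := by
    intro k a
    induction a with
    | zero => simp
    | succ a ih =>
        have hs1 : seq (k + (a+1)) = F (seq (k+a)) := by
          rw [hseqdef]
          simp only
          rw [show k + (a+1) = (k + a) + 1 by omega, Function.iterate_succ_apply']
        have hs2 : (sig d)^[N*(a+1)] (seq (k+(a+1))).1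
            = (sig d)^[N*a] ((sig d)^[N] (seq (k+(a+1))).1) := by
          rw [show N*(a+1) = N*a + N by ring, Function.iterate_add_apply]
        rw [hs2, hs1, hF (seq (k+a)), ih]
  obtain ⟨i, j, hne, heq⟩ := Finite.exists_ne_map_eq_of_infinite seq
  have hkey : ∀ i j : ℕ, i < j → seq i = seq j →
      x ∈ periodicPts (sig d) := by
    intro i j hij heq
    have h1 : (sig d)^[N*(j-i)] (seq j).1 = (seq i).1 := by
      have := hFiter2 i (j - i)
      rw [show i + (j - i) = j by omega] at this
      exact this
    rw [← heq] at h1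
    have hyper : Function.IsPeriodicPt (sig d) (N*(j-i)) (seq i).1 := h1
    have h2 : (sig d)^[N*i] (seq i).1 = x := by
      have := hFiter2 0 i
      rw [show (0:ℕ) + i = i by omega] at this
      exact this
    have h3 := Function.IsPeriodicPt.apply_iterate hyper (N*i)
    rw [h2] at h3
    exact Function.mk_mem_periodicPts (Nat.mul_pos hN1 (by omega)) h3
  have hxmem : x ∈ periodicPts (sig d) := by
    rcases Nat.lt_trichotomy i j with h | h | h
    · exact hkey i j h heq
    · exact absurd h hne
    · exact hkey j i h heq.symm
  refine ⟨hxmem, ?_⟩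
  set p := minimalPeriod (sig d) x with hpdef
  have hp1 : 0 < p := Function.minimalPeriod_pos_of_mem_periodicPts hxmem
  by_cases hvx : ∃ j', (sig d)^[N*j'] x = v
  · obtain ⟨j', hj'⟩ := hvx
    have h4 := Function.minimalPeriod_apply_iterate hxmem (N*j')
    rw [hj'] at h4
    exact h4.symm
  push_neg at hvx
  have hxN : (sig d)^[N] x = x := by
    apply Scaffold.cyc hd L v N hvN x hleaf hxv p hp1 ?_ hvx
    exact (Function.isPeriodicPt_minimalPeriod (sig d) x).const_mul N
  have hpN : p ∣ N := Function.IsPeriodicPt.minimalPeriod_dvd hxN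
  by_cases hxv2 : ∃ j', (sig d)^[p*j'] v = x
  · obtain ⟨j', hj'⟩ := hxv2
    have h4 := Function.minimalPeriod_apply_iterate hv (p*j')
    rw [hj'] at h4
    exact h4
  push_neg at hxv2
  obtain ⟨r, hr⟩ := id hpN
  have hr1 : 1 ≤ r := by
    rcases Nat.eq_zero_or_pos r with h0 | h0
    · rw [h0, mul_zero] at hr; omega
    · exact h0
  have hxp : (sig d)^[p] x = x := Function.iterate_minimalPeriod
  have hvp : (sig d)^[p] v = v := by
    apply Scaffold.cyc hd L x p hxp v (L.symm _ hleaf) (Ne.symm hxv) r hr1 ?_ hxv2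
    rw [← hr]
    exact hvN
  have hNp : N ∣ p := Function.IsPeriodicPt.minimalPeriod_dvd hvp
  exact Nat.dvd_antisymm hpN hNp


end
end

section
/- Let C be an infinite cone of a sibling σ_d-invariant geolamination with vertex v fixed by σ_d^n. Then every leaf of C is eventually mapped by iterates of σ_d^n to a degenerate leaf or to a leaf with both endpoints fixed by σ_d^n; i.e., each leaf in C is (pre)critical or (pre)periodic. Moreover C contains only finitely many leaves [v, a] with σ_d^n(a) = a. -/
open Function Set

noncomputable section

/-! ### Coordinates on the circle -/

def R (x : S1) : ℝ := ((AddCircle.equivIco 1 (0:ℝ)).toFun x : ℝ)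

lemma R_mem (x : S1) : R x ∈ Ico (0:ℝ) 1 := by
  have := ((AddCircle.equivIco 1 (0:ℝ)).toFun x).2
  simpa [R] using this

lemma coe_R (x : S1) : ((R x : ℝ) : S1) = x :=
  (AddCircle.equivIco 1 (0:ℝ)).symm_apply_apply x

lemma R_coe (y : ℝ) : R ((y:ℝ) : S1) = Int.fract y := by
  have := AddCircle.coe_equivIco_mk_apply (p := (1:ℝ)) y
  simp [R] at this ⊢
  try simpa using this

lemma R_inj {x y : S1} (h : R x = R y) : x = y := by
  rw [← coe_R x, ← coe_R y, h]

lemma R_eq_zero {x : S1} (h : R x = 0) : x = 0 := by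
  rw [← coe_R x, h]; norm_num

lemma R_zero : R (0 : S1) = 0 := by
  have : ((0:ℝ) : S1) = (0 : S1) := by norm_num
  rw [← this, R_coe]; simp

lemma pt_coe (u : ℝ) : pt ((u:ℝ) : S1) = Complex.exp ((2*Real.pi*u : ℝ) * Complex.I) := by
  rw [pt, AddCircle.toCircle_apply_mk, Circle.coe_exp]
  norm_num

lemma pt_inj : Function.Injective pt := fun x y h =>
  AddCircle.injective_toCircle one_ne_zero (Circle.coe_injective h)

lemma normSq_pt (t : S1) : Complex.normSq (pt t) = 1 := by
  rw [Complex.normSq_eq_norm_sq, pt, Circle.norm_coe]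
  norm_num

lemma sig_sub (d : ℕ) (a b : S1) : sig d a - sig d b = d • (a - b) := by
  rw [sig, sig, smul_sub]

lemma coe_smul_real (d : ℕ) (y : ℝ) : (d:ℕ) • ((y:ℝ) : S1) = ((d*y : ℝ) : S1) := by
  rw [← AddCircle.coe_nsmul]
  norm_num [nsmul_eq_mul]

lemma R_smul (d : ℕ) (x : S1) : R (d • x) = Int.fract (d * R x) := by
  conv_lhs => rw [← coe_R x]
  rw [coe_smul_real, R_coe]

lemma R_smul_sub (d : ℕ) (a b : S1) : R (sig d a - sig d b) = Int.fract (d * R (a - b)) := by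
  rw [sig_sub, R_smul]

lemma sig_iter (d k : ℕ) (x : S1) : (sig d)^[k] x = d^k • x := by
  induction k with
  | zero => simp
  | succ k ih =>
    rw [Function.iterate_succ_apply', ih, sig, smul_smul, pow_succ, mul_comm]

def E (u : ℝ) : ℂ := Complex.exp ((2*Real.pi*u : ℝ) * Complex.I)

lemma E_re (u : ℝ) : (E u).re = Real.cos (2*Real.pi*u) := by
  rw [E, Complex.exp_ofReal_mul_I_re]
lemma E_im (u : ℝ) : (E u).im = Real.sin (2*Real.pi*u) := by
  rw [E, Complex.exp_ofReal_mul_I_im]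
lemma normSq_E (u : ℝ) : Complex.normSq (E u) = 1 := by
  rw [Complex.normSq_apply, E_re, E_im]
  nlinarith [Real.sin_sq_add_cos_sq (2*Real.pi*u)]

def side (A B P : ℂ) : ℝ := (B-A).re*(P-A).im - (B-A).im*(P-A).re

lemma normSq_line (A B : ℂ) (hA : Complex.normSq A = 1) (hB : Complex.normSq B = 1) (μ : ℝ) :
    Complex.normSq (A + (μ:ℂ) * (B - A)) = 1 + μ*(μ-1)*Complex.normSq (B-A) := by
  simp only [Complex.normSq_apply, Complex.add_re, Complex.add_im, Complex.mul_re, Complex.mul_im,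
    Complex.sub_re, Complex.sub_im, Complex.ofReal_re, Complex.ofReal_im] at hA hB ⊢
  linear_combination (1-μ)*hA + μ*hB

lemma side_affine (A B C D : ℂ) (t : ℝ) :
    side A B (C + (t:ℂ)*(D-C)) = (1-t)*side A B C + t*side A B D := by
  simp only [side, Complex.add_re, Complex.add_im, Complex.mul_re, Complex.mul_im,
    Complex.sub_re, Complex.sub_im, Complex.ofReal_re, Complex.ofReal_im]
  ring

lemma side_E (x T c : ℝ) :
    side (E x) (E (x+T)) (E (x+c))
      = 4 * Real.sin (Real.pi*(c-T)) * Real.sin (Real.pi*T) * Real.sin (Real.pi*c) := by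
  have e1 : 2*Real.pi*(x+T) = (2*Real.pi*x) + 2*(Real.pi*T) := by ring
  have e2 : 2*Real.pi*(x+c) = (2*Real.pi*x) + 2*(Real.pi*c) := by ring
  have e3 : Real.pi*(c-T) = Real.pi*c - Real.pi*T := by ring
  simp only [side, Complex.sub_re, Complex.sub_im, E_re, E_im]
  rw [e1, e2, e3]
  rw [Real.cos_add, Real.sin_add, Real.cos_add, Real.sin_add,
    Real.cos_two_mul, Real.cos_two_mul, Real.sin_two_mul, Real.sin_two_mul, Real.sin_sub]
  have ha := Real.sin_sq_add_cos_sq (2*Real.pi*x)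
  have hu := Real.sin_sq_add_cos_sq (Real.pi*T)
  have hw := Real.sin_sq_add_cos_sq (Real.pi*c)
  set sa := Real.sin (2*Real.pi*x); set ca := Real.cos (2*Real.pi*x)
  set su := Real.sin (Real.pi*T); set cu := Real.cos (Real.pi*T)
  set sw := Real.sin (Real.pi*c); set cw := Real.cos (Real.pi*c)
  linear_combination (-4*sw*cw + 4*cu^2*sw*cw + 4*su*cu - 4*su*cu*cw^2) * ha
    + (4*sw*cw) * hu + (-4*su*cu) * hw

lemma mem_seg (A B : ℂ) {t : ℝ} (h0 : 0 ≤ t) (h1 : t ≤ 1) : A + (t:ℂ)*(B-A) ∈ segment ℝ A B := by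
  rw [segment_eq_image']
  exact ⟨t, ⟨h0, h1⟩, by simp [Complex.real_smul]⟩

lemma seg_param {A B z : ℂ} (h : z ∈ segment ℝ A B) :
    ∃ t : ℝ, 0 ≤ t ∧ t ≤ 1 ∧ z = A + (t:ℂ)*(B-A) := by
  rw [segment_eq_image'] at h
  obtain ⟨t, ht, hz⟩ := h
  exact ⟨t, ht.1, ht.2, by rw [← hz]; simp [Complex.real_smul]⟩

lemma eq_endpoint {A B z : ℂ} (hA : Complex.normSq A = 1) (hB : Complex.normSq B = 1)
    (hz : z ∈ segment ℝ A B) (h1 : Complex.normSq z = 1) : z = A ∨ z = B := by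
  obtain ⟨t, ht0, ht1, rfl⟩ := seg_param hz
  rw [normSq_line A B hA hB t] at h1
  have h2 : t*(t-1)*Complex.normSq (B-A) = 0 := by linarith
  rcases mul_eq_zero.1 h2 with h3 | h3
  · rcases mul_eq_zero.1 h3 with h4 | h4
    · left; simp [h4]
    · right; have h5 : t = 1 := by linarith
      rw [h5]; simp
  · have h6 : B - A = 0 := Complex.normSq_eq_zero.1 h3
    left; rw [h6]; simp

lemma crossing_core (x T p q : ℝ) (hT0 : 0 < T) (hT1 : T < 1) (hp0 : 0 < p) (hpT : p < T)
    (hqT : T < q) (hq1 : q < 1) :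
    ∃ z, z ∈ segment ℝ (E x) (E (x+T)) ∧ z ∈ segment ℝ (E (x+p)) (E (x+q)) ∧ ‖z‖ < 1 := by
  set A := E x with hA; set B := E (x+T) with hB; set C := E (x+p) with hC; set D := E (x+q) with hD
  have hπ := Real.pi_pos
  have sT : 0 < Real.sin (Real.pi*T) := Real.sin_pos_of_pos_of_lt_pi (by positivity) (by nlinarith)
  have hfC : side A B C < 0 := by
    rw [hA, hB, hC, side_E]
    have h1 : Real.sin (Real.pi*(p-T)) < 0 := by
      have h2 : Real.sin (Real.pi*(T-p)) > 0 := Real.sin_pos_of_pos_of_lt_pi (by nlinarith) (by nlinarith)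
      have e : Real.pi*(p-T) = -(Real.pi*(T-p)) := by ring
      rw [e, Real.sin_neg]; linarith
    have h2 : 0 < Real.sin (Real.pi*p) := Real.sin_pos_of_pos_of_lt_pi (by positivity) (by nlinarith)
    nlinarith [mul_pos sT h2]
  have hfD : 0 < side A B D := by
    rw [hA, hB, hD, side_E]
    have h1 : 0 < Real.sin (Real.pi*(q-T)) := Real.sin_pos_of_pos_of_lt_pi (by nlinarith) (by nlinarith)
    have h2 : 0 < Real.sin (Real.pi*q) := Real.sin_pos_of_pos_of_lt_pi (by nlinarith) (by nlinarith)
    nlinarith [mul_pos sT h2]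
  set fC := side A B C with hfCdef
  set fD := side A B D with hfDdef
  have hden : fC - fD < 0 := by linarith
  have hdenne : fC - fD ≠ 0 := ne_of_lt hden
  set t : ℝ := fC / (fC - fD) with htdef
  have ht0 : 0 < t := div_pos_of_neg_of_neg hfC hden
  have ht1 : t < 1 := by
    have h7 : 1 - t = (-fD)/(fC - fD) := by rw [htdef]; field_simp; ring
    have h8 : 0 < (-fD)/(fC - fD) := div_pos_of_neg_of_neg (by linarith) hden
    linarith
  set z : ℂ := C + (t:ℂ)*(D-C) with hzdef
  have hzCD : z ∈ segment ℝ C D := mem_seg C D ht0.le ht1.le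
  have hCD : Complex.normSq (D - C) ≠ 0 := by
    intro h
    have h9 : D - C = 0 := Complex.normSq_eq_zero.1 h
    have hDC : D = C := by linear_combination h9
    have h' := hfDdef
    rw [hDC, ← hfCdef] at h'
    linarith
  have hnz : Complex.normSq z < 1 := by
    rw [hzdef, normSq_line C D (by rw [hC]; exact normSq_E _) (by rw [hD]; exact normSq_E _) t]
    have h10 : t*(t-1) < 0 := mul_neg_of_pos_of_neg ht0 (by linarith)
    have h5 : (0:ℝ) < Complex.normSq (D-C) := lt_of_le_of_ne (Complex.normSq_nonneg _) (Ne.symm hCD)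
    nlinarith
  have habs : ‖z‖ < 1 := by
    have h11 := Complex.sq_norm z
    nlinarith [norm_nonneg z]
  have hside : side A B z = 0 := by
    rw [hzdef, side_affine, ← hfCdef, ← hfDdef, htdef]
    field_simp
    ring
  set e := B - A with hedef
  have hABnsq : Complex.normSq e ≠ 0 := by
    intro h
    have h9 : e = 0 := Complex.normSq_eq_zero.1 h
    have hBA : B = A := by rw [hedef] at h9; linear_combination h9
    have h' := hfDdef
    rw [hBA] at h'
    simp [side] at h'
    linarith
  have he : e ≠ 0 := fun h => hABnsq (by rw [h]; simp)
  set w : ℂ := (z - A)/e with hwdef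
  have him : w.im = 0 := by
    rw [hwdef, Complex.div_im]
    have hs : e.re*(z-A).im - e.im*(z-A).re = 0 := hside
    have : (z-A).im * e.re - (z-A).re * e.im = 0 := by linarith
    rw [div_sub_div_same]
    rw [this]
    simp
  set μ : ℝ := w.re with hμdef
  have hwre : w = (μ:ℂ) := by
    apply Complex.ext
    · simp [hμdef]
    · simp [him]
  have hzA : z = A + (μ:ℂ)*e := by
    have : z - A = w * e := by rw [hwdef]; field_simp
    rw [hwre] at this
    linear_combination this
  have hμrange : 0 < μ ∧ μ < 1 := by
    have h12 : Complex.normSq z = 1 + μ*(μ-1)*Complex.normSq e := by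
      rw [hzA] at hnz ⊢
      exact normSq_line A B (by rw [hA]; exact normSq_E _) (by rw [hB]; exact normSq_E _) μ
    rw [h12] at hnz
    have h13 : (0:ℝ) < Complex.normSq e := lt_of_le_of_ne (Complex.normSq_nonneg _) (Ne.symm hABnsq)
    have h14 : μ*(μ-1) < 0 := by nlinarith
    constructor
    · nlinarith
    · nlinarith
  refine ⟨z, ?_, hzCD, habs⟩
  rw [hzA]
  exact mem_seg A B hμrange.1.le hμrange.2.le

lemma crossing_chord (w : S1) {T p q : ℝ} (hT0 : 0 < T) (hT1 : T < 1) (hp0 : 0 < p)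
    (hpT : p < T) (hqT : T < q) (hq1 : q < 1) :
    Crosses (chord w (w + ((T:ℝ) : S1))) (chord (w + ((q:ℝ) : S1)) (w + ((p:ℝ) : S1))) := by
  obtain ⟨z, h1, h2, h3⟩ := crossing_core (R w) T p q hT0 hT1 hp0 hpT hqT hq1
  have e0 : pt w = E (R w) := by
    conv_lhs => rw [← coe_R w]
    rw [pt_coe]; rfl
  have ec : ∀ c : ℝ, pt (w + ((c:ℝ) : S1)) = E (R w + c) := by
    intro c
    conv_lhs => rw [← coe_R w]
    rw [← AddCircle.coe_add, pt_coe]; rfl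
  refine ⟨z, ?_, ?_, h3⟩
  · rw [chord, e0, ec]; exact h1
  · rw [chord, ec, ec, segment_symm]; exact h2

/-! ### The one-step order preservation lemma -/

lemma oneStep (d : ℕ) (hd : 2 ≤ d) (L : Geolam d) {w a b : S1}
    (ha : (w,a) ∈ L.leaves) (hb : (w,b) ∈ L.leaves) (hwb : sig d w ≠ sig d b)
    (h0 : 0 < R (a - w)) (hab : R (a - w) < R (b - w)) :
    R (sig d a - sig d w) ≤ R (sig d b - sig d w) := by
  by_contra hbad
  push_neg at hbad
  set T := R (a - w) with hTdef
  set s := R (b - w) with hsdef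
  set sh := R (sig d b - sig d w) with hshdef
  have hsh : sh = Int.fract (d * s) := R_smul_sub d b w
  have hfT : R (sig d a - sig d w) = Int.fract (d * T) := R_smul_sub d a w
  have hshpos : 0 < sh := by
    have hne : sig d b - sig d w ≠ 0 := sub_ne_zero.mpr (Ne.symm hwb)
    have h2 : sh ≠ 0 := fun h => hne (R_eq_zero h)
    exact lt_of_le_of_ne (R_mem _).1 (Ne.symm h2)
  have hbad' : sh < Int.fract (d * T) := by rw [← hfT]; exact hbad
  have hT1 : T < 1 := lt_trans hab (R_mem _).2
  have hs1 : s < 1 := (R_mem _).2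
  obtain ⟨f, ⟨i0, hi0⟩, hfl, hfim, hdisj⟩ := L.sibling (w,b) hb hwb
  set Wc : Fin d → ℝ := fun i => R ((f i).1 - w) with hWcdef
  set Bc : Fin d → ℝ := fun i => R ((f i).2 - w) with hBcdef
  have hWfr : ∀ i, Int.fract (d * Wc i) = 0 := by
    intro i
    have h1 : sig d (f i).1 - sig d w = 0 := by rw [(hfim i).1]; exact sub_self _
    have := R_smul_sub d (f i).1 w
    rw [h1, R_zero] at this
    exact this.symm
  have hBfr : ∀ i, Int.fract (d * Bc i) = sh := by
    intro i
    have h1 : sig d (f i).2 - sig d w = sig d b - sig d w := by rw [(hfim i).2]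
    have := R_smul_sub d (f i).2 w
    rw [h1] at this
    rw [hshdef, this]
  have hWne : ∀ i j, i ≠ j → (f i).1 ≠ (f j).1 := by
    intro i j hij h
    have h1 : pt (f i).1 ∈ chord (f i).1 (f i).2 := left_mem_segment ℝ _ _
    have h2 : pt (f i).1 ∈ chord (f j).1 (f j).2 := by
      rw [h]; exact left_mem_segment ℝ _ _
    exact Set.disjoint_left.mp (hdisj i j hij) h1 h2
  have hBne : ∀ i j, i ≠ j → (f i).2 ≠ (f j).2 := by
    intro i j hij h
    have h1 : pt (f i).2 ∈ chord (f i).1 (f i).2 := right_mem_segment ℝ _ _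
    have h2 : pt (f i).2 ∈ chord (f j).1 (f j).2 := by
      rw [h]; exact right_mem_segment ℝ _ _
    exact Set.disjoint_left.mp (hdisj i j hij) h1 h2
  have hBpos : ∀ i, 0 < Bc i := by
    intro i
    rcases lt_or_eq_of_le (R_mem ((f i).2 - w)).1 with h | h
    · exact h
    · exfalso
      have h1 : (f i).2 = w := by
        have := R_eq_zero h.symm; rwa [sub_eq_zero] at this
      exact hwb (by rw [← (hfim i).2, h1])
  set K : ℤ := ⌊d*T⌋ with hKdef
  have hdTpos : (0:ℝ) ≤ d * T := by positivity
  have hK0 : 0 ≤ K := Int.floor_nonneg.2 hdTpos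
  have hKd : K < d := by
    have : (d:ℝ)*T < d := by
      have : (0:ℝ) < d := by positivity
      nlinarith
    exact_mod_cast Int.floor_lt.2 (by exact_mod_cast this)
  have hfrT0 : 0 < Int.fract (d*T) := lt_trans hshpos hbad'
  have hdT : (d:ℝ)*T = K + Int.fract (d*T) := by
    rw [hKdef]; exact (Int.floor_add_fract _).symm
  set AA : Finset (Fin d) := Finset.univ.filter (fun i => Bc i < T) with hAAdef
  set BB : Finset (Fin d) := Finset.univ.filter (fun i => 0 < Wc i ∧ Wc i < T) with hBBdef
  have hWeq : ∀ i, (d:ℝ) * Wc i = (⌊d * Wc i⌋ : ℤ) := by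
    intro i
    have h2 := Int.floor_add_fract ((d:ℝ) * Wc i)
    rw [hWfr i] at h2
    linarith
  have hBeq : ∀ i, (d:ℝ) * Bc i = (⌊d * Bc i⌋ : ℤ) + sh := by
    intro i
    have h2 := Int.floor_add_fract ((d:ℝ) * Bc i)
    rw [hBfr i] at h2
    linarith
  have hdpos : (0:ℝ) < d := by positivity
  -- |BB| ≤ K
  have hBBcard : (BB.card : ℤ) ≤ K := by
    have h1 : BB.card ≤ (Finset.Icc (1:ℤ) K).card := by
      apply Finset.card_le_card_of_injOn (fun i => ⌊d * Wc i⌋)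
      · intro i hi
        simp only [Finset.mem_coe, hBBdef, Finset.mem_filter] at hi
        obtain ⟨-, h1, h2⟩ := hi
        simp only [Finset.mem_coe, Finset.mem_Icc]
        constructor
        · have : (0:ℝ) < (⌊d * Wc i⌋ : ℤ) := by rw [← hWeq i]; positivity
          exact_mod_cast this
        · have h3 : ((⌊d * Wc i⌋ : ℤ) : ℝ) < K + 1 := by
            rw [← hWeq i]
            calc (d:ℝ) * Wc i < d * T := by nlinarith
            _ < K + 1 := by
              rw [hKdef]
              have := Int.lt_floor_add_one ((d:ℝ)*T)
              push_cast
              push_cast at this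
              linarith
          have : (⌊d * Wc i⌋ : ℤ) < K + 1 := by exact_mod_cast h3
          omega
      · intro i hi j hj hij
        simp only at hij
        by_contra hne
        apply hWne i j hne
        have h4 : (d:ℝ) * Wc i = d * Wc j := by rw [hWeq i, hWeq j, hij]
        have h5 : Wc i = Wc j := mul_left_cancel₀ (ne_of_gt hdpos) h4
        have h6 : (f i).1 - w = (f j).1 - w := R_inj h5
        exact sub_left_injective h6
    have h2 : (Finset.Icc (1:ℤ) K).card = K.toNat := by
      rw [Int.card_Icc]; congr 1; omega
    rw [h2] at h1
    calc (BB.card : ℤ) ≤ (K.toNat : ℤ) := by exact_mod_cast h1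
    _ = K := by omega
  -- |AAᶜ| ≤ d - 1 - K
  have hAAc : ((AAᶜ).card : ℤ) ≤ (d:ℤ) - 1 - K := by
    have h1 : (AAᶜ).card ≤ (Finset.Icc (K+1) ((d:ℤ)-1)).card := by
      apply Finset.card_le_card_of_injOn (fun i => ⌊d * Bc i⌋)
      · intro i hi
        simp only [Finset.mem_coe, Finset.mem_compl, hAAdef, Finset.mem_filter] at hi
        have hnot : ¬ (Bc i < T) := fun hcon => hi ⟨Finset.mem_univ i, hcon⟩
        push_neg at hnot
        have hne : Bc i ≠ T := by
          intro h
          rw [← h] at hbad'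
          rw [hBfr i] at hbad'
          exact lt_irrefl _ hbad'
        have hgt : T < Bc i := lt_of_le_of_ne hnot (Ne.symm hne)
        simp only [Finset.mem_coe, Finset.mem_Icc]
        constructor
        · have h3 : (K:ℝ) + sh < (⌊d * Bc i⌋ : ℤ) + sh := by
            rw [← hBeq i]
            calc (K:ℝ) + sh < K + Int.fract (d*T) := by linarith
            _ = d * T := hdT.symm
            _ < d * Bc i := by nlinarith
          have : (K:ℝ) < (⌊d * Bc i⌋ : ℤ) := by linarith
          have : K < ⌊d * Bc i⌋ := by exact_mod_cast this
          omega
        · have hb1 : Bc i < 1 := (R_mem ((f i).2 - w)).2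
          have h4 : (d:ℝ) * Bc i < d := by nlinarith
          have h5 := hBeq i
          have h3 : ((⌊d * Bc i⌋ : ℤ) : ℝ) < d := by linarith
          have : (⌊d * Bc i⌋ : ℤ) < (d:ℤ) := by exact_mod_cast h3
          omega
      · intro i hi j hj hij
        simp only at hij
        by_contra hne
        apply hBne i j hne
        have h4 : (d:ℝ) * Bc i = d * Bc j := by
          rw [hBeq i, hBeq j, hij]
        have h5 : Bc i = Bc j := by
          have := mul_left_cancel₀ (ne_of_gt hdpos) h4
          exact this
        have h6 : (f i).2 - w = (f j).2 - w := R_inj h5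
        exact sub_left_injective h6
    have h2 : (Finset.Icc (K+1) ((d:ℤ)-1)).card = ((d:ℤ) - 1 - K).toNat := by
      rw [Int.card_Icc]; congr 1; omega
    rw [h2] at h1
    calc ((AAᶜ).card : ℤ) ≤ (((d:ℤ) - 1 - K).toNat : ℤ) := by exact_mod_cast h1
    _ = (d:ℤ) - 1 - K := by omega
  -- find the interleaving chord
  have hcards : BB.card < AA.card := by
    have h1 : AA.card + (AAᶜ).card = d := by
      rw [Finset.card_add_card_compl]; exact Fintype.card_fin d
    have h2 : (AA.card : ℤ) + ((AAᶜ).card : ℤ) = (d:ℤ) := by exact_mod_cast h1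
    have h3 : (BB.card : ℤ) < (AA.card : ℤ) := by omega
    exact_mod_cast h3
  have hnotsub : ¬ AA ⊆ BB := fun hsub => absurd (Finset.card_le_card hsub) (not_le.mpr hcards)
  obtain ⟨i, hiA, hiB⟩ := Finset.not_subset.mp hnotsub
  rw [hAAdef, Finset.mem_filter] at hiA
  have hBcT : Bc i < T := hiA.2
  have hBcpos : 0 < Bc i := hBpos i
  -- Wc i > T
  have hWcT : T < Wc i ∧ Wc i < 1 := by
    have hnot : ¬ (0 < Wc i ∧ Wc i < T) := fun hcon => hiB (by rw [hBBdef, Finset.mem_filter]; exact ⟨Finset.mem_univ i, hcon⟩)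
    have hW0 : 0 ≤ Wc i := (R_mem _).1
    have hW1 : Wc i < 1 := (R_mem _).2
    rcases eq_or_lt_of_le hW0 with h | h
    · -- Wc i = 0 : f i starts at w
      exfalso
      have hfi1 : (f i).1 = w := by
        have := R_eq_zero h.symm; rwa [sub_eq_zero] at this
      by_cases hio : i = i0
      · have hBs : Bc i = s := by
          rw [hio]
          show R ((f i0).2 - w) = s
          rw [hi0]
        linarith
      · have h1 : pt w ∈ chord (f i).1 (f i).2 := by
          rw [← hfi1]; exact left_mem_segment ℝ _ _
        have h2 : pt w ∈ chord (f i0).1 (f i0).2 := by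
          rw [hi0]; exact left_mem_segment ℝ _ _
        exact Set.disjoint_left.mp (hdisj i i0 hio) h1 h2
    · have hge : T ≤ Wc i := by
        by_contra hlt
        push_neg at hlt
        exact hnot ⟨h, hlt⟩
      have hne : Wc i ≠ T := by
        intro hWT
        have := hWfr i
        rw [hWT] at this
        rw [this] at hfrT0
        exact lt_irrefl _ hfrT0
      exact ⟨lt_of_le_of_ne hge (Ne.symm hne), hW1⟩
  -- geometry: the chords cross
  set p := Bc i with hpdef
  set q := Wc i with hqdef
  have haT : a = w + ((T:ℝ) : S1) := by
    have h1 : ((T:ℝ) : S1) = a - w := coe_R _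
    rw [h1]; abel
  have hf1 : (f i).1 = w + ((q:ℝ) : S1) := by
    have h1 : ((q:ℝ) : S1) = (f i).1 - w := coe_R _
    rw [h1]; abel
  have hf2 : (f i).2 = w + ((p:ℝ) : S1) := by
    have h1 : ((p:ℝ) : S1) = (f i).2 - w := coe_R _
    rw [h1]; abel
  have hcross : Crosses (chord w a) (chord (f i).1 (f i).2) := by
    rw [haT, hf1, hf2]
    exact crossing_chord w h0 hT1 hBcpos hBcT hWcT.1 hWcT.2
  rcases L.unlinked (w,a) ha (f i) (hfl i) with heq | hncr
  · -- equal chords: impossible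
    simp only at heq
    have h1 : pt (f i).2 ∈ chord w a := by
      rw [heq]; exact right_mem_segment ℝ _ _
    rcases eq_endpoint (normSq_pt w) (normSq_pt a) h1 (normSq_pt _) with h2 | h2
    · have h3 : (f i).2 = w := pt_inj h2
      have : Bc i = 0 := by rw [hBcdef]; simp only; rw [h3, sub_self, R_zero]
      linarith
    · have h3 : (f i).2 = a := pt_inj h2
      have : Bc i = T := by rw [hBcdef]; simp only; rw [h3]
      linarith
  · exact hncr hcross

/-! ### Iteration -/

lemma leavesIter (d : ℕ) (L : Geolam d) (k : ℕ) {w y : S1} (h : (w,y) ∈ L.leaves) :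
    ((sig d)^[k] w, (sig d)^[k] y) ∈ L.leaves := by
  induction k with
  | zero => simpa using h
  | succ k ih =>
    rw [Function.iterate_succ_apply', Function.iterate_succ_apply']
    exact L.fwd _ ih

lemma nStep (d n : ℕ) (hd : 2 ≤ d) (L : Geolam d) (v : S1) (hv : (sig d)^[n] v = v)
    (i : ℕ) (hi : i ≤ n) {y z : S1} (hy : (v,y) ∈ L.leaves) (hz : (v,z) ∈ L.leaves)
    (h0 : 0 < R (y - v)) (hyz : R (y - v) < R (z - v)) :
    (sig d)^[n] y = v ∨ (sig d)^[n] z = v ∨ (sig d)^[n] y = (sig d)^[n] z ∨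
    (0 < R ((sig d)^[i] y - (sig d)^[i] v) ∧
      R ((sig d)^[i] y - (sig d)^[i] v) < R ((sig d)^[i] z - (sig d)^[i] v)) := by
  have collapse : ∀ u : S1, ∀ j, j ≤ n → (sig d)^[j] u = (sig d)^[j] v → (sig d)^[n] u = v := by
    intro u j hj h
    have h1 : n = (n - j) + j := (Nat.sub_add_cancel hj).symm
    rw [h1, Function.iterate_add_apply, h, ← Function.iterate_add_apply, ← h1, hv]
  have collapse2 : ∀ u u' : S1, ∀ j, j ≤ n → (sig d)^[j] u = (sig d)^[j] u' →
      (sig d)^[n] u = (sig d)^[n] u' := by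
    intro u u' j hj h
    have h1 : n = (n - j) + j := (Nat.sub_add_cancel hj).symm
    rw [h1, Function.iterate_add_apply, Function.iterate_add_apply, h]
  induction i with
  | zero =>
    right; right; right
    simpa using ⟨h0, hyz⟩
  | succ i ih =>
    have hi' : i ≤ n := Nat.le_of_succ_le hi
    rcases ih hi' with h | h | h | ⟨hp, hlt⟩
    · exact Or.inl h
    · exact Or.inr (Or.inl h)
    · exact Or.inr (Or.inr (Or.inl h))
    · by_cases hc1 : (sig d)^[i+1] z = (sig d)^[i+1] v
      · exact Or.inr (Or.inl (collapse z (i+1) hi hc1))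
      · have hwz : sig d ((sig d)^[i] v) ≠ sig d ((sig d)^[i] z) := by
          intro h
          apply hc1
          rw [Function.iterate_succ_apply', Function.iterate_succ_apply']
          exact h.symm
        have hyL : ((sig d)^[i] v, (sig d)^[i] y) ∈ L.leaves := leavesIter d L i hy
        have hzL : ((sig d)^[i] v, (sig d)^[i] z) ∈ L.leaves := leavesIter d L i hz
        have hle := oneStep d hd L hyL hzL hwz hp hlt
        by_cases hc2 : (sig d)^[i+1] y = (sig d)^[i+1] v
        · exact Or.inl (collapse y (i+1) hi hc2)
        · by_cases hc3 : (sig d)^[i+1] y = (sig d)^[i+1] z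
          · exact Or.inr (Or.inr (Or.inl (collapse2 y z (i+1) hi hc3)))
          · right; right; right
            simp only [Function.iterate_succ_apply'] at hc2 hc3 ⊢
            constructor
            · have hne : sig d ((sig d)^[i] y) - sig d ((sig d)^[i] v) ≠ 0 :=
                sub_ne_zero.mpr hc2
              exact lt_of_le_of_ne (R_mem _).1 (Ne.symm (fun h => hne (R_eq_zero h)))
            · rcases lt_or_eq_of_le hle with h | h
              · exact h
              · exfalso
                apply hc3
                have h2 := R_inj h
                have h3 := sub_left_injective h2
                exact h3

/-! ### The limiting contradiction -/

lemma tailContra (m : ℕ) (hm : 2 ≤ m) (ρ : ℕ → ℝ) (lam : ℝ)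
    (hint : ∀ j, ∃ K : ℤ, ρ (j+1) - m * ρ j = K)
    (hne : ∀ j, ρ j ≠ lam)
    (hdist : ∀ j, |ρ (j+1) - lam| < |ρ j - lam|)
    (happrox : ∀ ε > 0, ∃ j0, ∀ j ≥ j0, |ρ j - lam| < ε) : False := by
  have hm1 : (1:ℝ) ≤ (m:ℝ) := by exact_mod_cast Nat.one_le_of_lt hm
  have hmpos : (0:ℝ) < (m:ℝ) := by linarith
  have hm0 : (0:ℝ) ≤ (m:ℝ) := le_of_lt hmpos
  set ε0 : ℝ := 1/(2*((m:ℝ)+1)) with hε0def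
  have hε0 : 0 < ε0 := by positivity
  have k1 : 2*(m:ℝ)*ε0 + 2*ε0 = 1 := by
    rw [hε0def]; field_simp
  obtain ⟨j0, hj0⟩ := happrox ε0 hε0
  obtain ⟨K0, hK0⟩ := hint j0
  have hconst : ∀ j, j0 ≤ j → ρ (j+1) - m * ρ j = K0 := by
    intro j hj
    obtain ⟨KK, hKK⟩ := hint j
    have b1 := abs_lt.mp (hj0 j hj)
    have b2 := abs_lt.mp (hj0 (j+1) (le_trans hj (Nat.le_succ j)))
    have b3 := abs_lt.mp (hj0 j0 le_rfl)
    have b4 := abs_lt.mp (hj0 (j0+1) (Nat.le_succ j0))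
    have c1 : (m:ℝ)*(ρ j - lam) < m*ε0 := by nlinarith [b1.2]
    have c2 : -((m:ℝ)*ε0) < m*(ρ j - lam) := by nlinarith [b1.1]
    have c3 : (m:ℝ)*(ρ j0 - lam) < m*ε0 := by nlinarith [b3.2]
    have c4 : -((m:ℝ)*ε0) < m*(ρ j0 - lam) := by nlinarith [b3.1]
    have habs : |(KK:ℝ) - K0| < 1 := by
      rw [← hKK, ← hK0, abs_lt]
      constructor
      · linarith
      · linarith
    have h2 : |KK - K0| < 1 := by
      have h4 : |((KK - K0 : ℤ) : ℝ)| < 1 := by push_cast; exact habs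
      exact_mod_cast h4
    have h5 := abs_lt.mp h2
    have h6 : KK = K0 := by omega
    rw [← h6, ← hKK]
  set c : ℝ := (K0:ℝ) - (1 - m) * lam with hcdef
  have hc0 : c = 0 := by
    by_contra hc
    have hcpos : 0 < |c| := abs_pos.mpr hc
    have hε' : 0 < |c|/(2*((m:ℝ)+1)) := by positivity
    obtain ⟨j1, hj1⟩ := happrox (|c|/(2*((m:ℝ)+1))) hε'
    set jj := max j0 j1 with hjjdef
    have hja : j0 ≤ jj := le_max_left _ _
    have hjb : j1 ≤ jj := le_max_right _ _
    have b1 := abs_lt.mp (hj1 jj hjb)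
    have b2 := abs_lt.mp (hj1 (jj+1) (le_trans hjb (Nat.le_succ jj)))
    have e3 := hconst jj hja
    have hce : c = (ρ (jj+1) - lam) - m * (ρ jj - lam) := by
      rw [hcdef, ← e3]; ring
    set ee := |c|/(2*((m:ℝ)+1)) with heedef
    have c1 : (m:ℝ)*(ρ jj - lam) < m*ee := by nlinarith [b1.2]
    have c2 : -((m:ℝ)*ee) < m*(ρ jj - lam) := by nlinarith [b1.1]
    have k2 : 2*(m:ℝ)*ee + 2*ee = |c| := by
      rw [heedef]; field_simp
    have habs2 : |c| < |c| := by
      conv_lhs => rw [hce]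
      rw [abs_lt]
      constructor
      · linarith
      · linarith
    exact absurd habs2 (lt_irrefl _)
  have hfin : ρ (j0+1) - lam = m * (ρ j0 - lam) := by
    have e3 := hconst j0 le_rfl
    have e4 : (K0:ℝ) = (1-m)*lam := by
      rw [hcdef] at hc0; linarith
    rw [e4] at e3
    linarith [e3]
  have h1 : |ρ (j0+1) - lam| = m * |ρ j0 - lam| := by
    rw [hfin, abs_mul, abs_of_nonneg hm0]
  have h2 := hdist j0
  have h3 : 0 < |ρ j0 - lam| := abs_pos.mpr (sub_ne_zero.mpr (hne j0))
  nlinarith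

/-! ### Main theorem -/


/-- in an infinite cone with `σ_d^n`-fixed vertex `v`, every leaf is
(pre)critical or (pre)periodic, and only finitely many leaves `[v,a]` have `σ_d^n a = a`. -/
theorem stmt6 (d n : ℕ) (hd : 2 ≤ d) (hn : 1 ≤ n) (L : Geolam d) (v : S1)
    (hv : (sig d)^[n] v = v)
    (hinf : {x : S1 | x ≠ v ∧ (v, x) ∈ L.leaves}.Infinite) :
    (∀ x : S1, x ≠ v → (v, x) ∈ L.leaves →
      ∃ j : ℕ, (sig d)^[n * j] x = v ∨ (sig d)^[n] ((sig d)^[n * j] x) = (sig d)^[n * j] x) ∧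
    {x : S1 | x ≠ v ∧ (v, x) ∈ L.leaves ∧ (sig d)^[n] x = x}.Finite := by
  have hd1 : 1 ≤ d := le_trans one_le_two hd
  set m := d^n with hmdef
  have hm2 : 2 ≤ m := by
    calc 2 = 2^1 := (pow_one 2).symm
    _ ≤ d^1 := Nat.pow_le_pow_left hd 1
    _ ≤ d^n := Nat.pow_le_pow_right hd1 hn
  constructor
  · intro x hxv hxL
    by_contra hC
    push_neg at hC
    set X : ℕ → S1 := fun j => (sig d)^[n*j] x with hXdef
    have hXsucc : ∀ j, X (j+1) = (sig d)^[n] (X j) := by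
      intro j
      show (sig d)^[n*(j+1)] x = (sig d)^[n] ((sig d)^[n*j] x)
      rw [← Function.iterate_add_apply]
      congr 1
      ring
    have hXv : ∀ j, X j ≠ v := fun j => (hC j).1
    have hXfix : ∀ j, (sig d)^[n] (X j) ≠ X j := fun j => (hC j).2
    have hXleaf : ∀ j, (v, X j) ∈ L.leaves := by
      intro j
      induction j with
      | zero =>
        show (v, (sig d)^[n*0] x) ∈ L.leaves
        simpa using hxL
      | succ j ih =>
        have h1 := leavesIter d L n (w := v) (y := X j) ih
        rw [hv] at h1
        rw [hXsucc j]
        exact h1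
    set ρ : ℕ → ℝ := fun j => R (X j - v) with hρdef
    have hρpos : ∀ j, 0 < ρ j := by
      intro j
      have hne : X j - v ≠ 0 := sub_ne_zero.mpr (hXv j)
      exact lt_of_le_of_ne (R_mem _).1 (Ne.symm (fun h => hne (R_eq_zero h)))
    have hρlt1 : ∀ j, ρ j < 1 := fun j => (R_mem _).2
    have key : ∀ j, ρ j < ρ (j+1) → ρ (j+1) < ρ (j+2) := by
      intro j hj
      have h := nStep d n hd L v hv n le_rfl (hXleaf j) (hXleaf (j+1)) (hρpos j) hj
      rcases h with h | h | h | h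
      · exact absurd (by rw [hXsucc j]; exact h) (hXv (j+1))
      · exact absurd (by rw [hXsucc (j+1)]; exact h) (hXv (j+2))
      · exfalso
        apply hXfix (j+1)
        rw [← hXsucc j] at h
        exact h.symm
      · rw [hv, ← hXsucc j, ← hXsucc (j+1)] at h
        exact h.2
    have key2 : ∀ j, ρ (j+1) < ρ j → ρ (j+2) < ρ (j+1) := by
      intro j hj
      have h := nStep d n hd L v hv n le_rfl (hXleaf (j+1)) (hXleaf j) (hρpos (j+1)) hj
      rcases h with h | h | h | h
      · exact absurd (by rw [hXsucc (j+1)]; exact h) (hXv (j+2))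
      · exact absurd (by rw [hXsucc j]; exact h) (hXv (j+1))
      · exfalso
        apply hXfix (j+1)
        rw [← hXsucc j] at h
        exact h
      · rw [hv, ← hXsucc j, ← hXsucc (j+1)] at h
        exact h.2
    have hint : ∀ j, ∃ K : ℤ, ρ (j+1) - m * ρ j = K := by
      intro j
      have hmv : (m:ℕ) • v = v := by rw [← sig_iter, hv]
      have h1 : X (j+1) - v = (m:ℕ) • (X j - v) := by
        rw [hXsucc j, sig_iter, smul_sub, hmv]
      have h2 : ((ρ (j+1) : ℝ) : S1) = (((m:ℝ) * ρ j : ℝ) : S1) := by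
        calc ((ρ (j+1) : ℝ) : S1) = X (j+1) - v := coe_R _
        _ = (m:ℕ) • (X j - v) := h1
        _ = (m:ℕ) • ((ρ j : ℝ) : S1) := by rw [coe_R]
        _ = (((m:ℝ) * ρ j : ℝ) : S1) := by rw [coe_smul_real]
      have h3 : ((ρ (j+1) - (m:ℝ) * ρ j : ℝ) : S1) = 0 := by
        rw [AddCircle.coe_sub, h2, sub_self]
      rw [AddCircle.coe_eq_zero_iff] at h3
      obtain ⟨k, hk⟩ := h3
      refine ⟨k, ?_⟩
      rw [← hk]
      simp [zsmul_eq_mul]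
    rcases lt_trichotomy (ρ 0) (ρ 1) with hlt | heq | hgt
    · have hmono : ∀ j, ρ j < ρ (j+1) := by
        intro j; induction j with
        | zero => exact hlt
        | succ j ih => exact key j ih
      have hmono' : Monotone ρ := monotone_nat_of_le_succ (fun j => (hmono j).le)
      have hbdd : BddAbove (Set.range ρ) := ⟨1, by rintro r ⟨j, rfl⟩; exact (hρlt1 j).le⟩
      set lam := ⨆ j, ρ j with hlamdef
      have hle : ∀ j, ρ j ≤ lam := fun j => le_ciSup hbdd j
      have hlam_ne : ∀ j, ρ j ≠ lam := by
        intro j h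
        have h1 := hmono j
        have h2 := hle (j+1)
        rw [h] at h1
        linarith
      have hdist : ∀ j, |ρ (j+1) - lam| < |ρ j - lam| := by
        intro j
        have h1 : ρ j ≤ lam := hle j
        have h2 : ρ (j+1) ≤ lam := hle (j+1)
        have h3 := hmono j
        rw [abs_of_nonpos (by linarith), abs_of_nonpos (by linarith)]
        linarith
      have happrox : ∀ ε > 0, ∃ j0, ∀ j ≥ j0, |ρ j - lam| < ε := by
        intro ε hε
        obtain ⟨j0, hj0⟩ := exists_lt_of_lt_ciSup (show lam - ε < ⨆ j, ρ j by
          rw [← hlamdef]; linarith)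
        refine ⟨j0, fun j hj => ?_⟩
        have h3 : ρ j0 ≤ ρ j := hmono' hj
        have h4 : ρ j ≤ lam := hle j
        rw [abs_of_nonpos (by linarith)]
        simp only [neg_sub]
        linarith
      exact tailContra m hm2 ρ lam hint hlam_ne hdist happrox
    · have h1 : X 0 - v = X 1 - v := R_inj heq
      have h2 : X 0 = X 1 := sub_left_injective h1
      apply hXfix 0
      rw [← hXsucc 0, ← h2]
    · have hmono : ∀ j, ρ (j+1) < ρ j := by
        intro j; induction j with
        | zero => exact hgt
        | succ j ih => exact key2 j ih
      have hmono' : Antitone ρ := antitone_nat_of_succ_le (fun j => (hmono j).le)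
      have hbdd : BddBelow (Set.range ρ) := ⟨0, by rintro r ⟨j, rfl⟩; exact (R_mem _).1⟩
      set lam := ⨅ j, ρ j with hlamdef
      have hle : ∀ j, lam ≤ ρ j := fun j => ciInf_le hbdd j
      have hlam_ne : ∀ j, ρ j ≠ lam := by
        intro j h
        have h1 := hmono j
        have h2 := hle (j+1)
        rw [h] at h1
        linarith
      have hdist : ∀ j, |ρ (j+1) - lam| < |ρ j - lam| := by
        intro j
        have h1 : lam ≤ ρ j := hle j
        have h2 : lam ≤ ρ (j+1) := hle (j+1)
        have h3 := hmono j
        rw [abs_of_nonneg (by linarith), abs_of_nonneg (by linarith)]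
        linarith
      have happrox : ∀ ε > 0, ∃ j0, ∀ j ≥ j0, |ρ j - lam| < ε := by
        intro ε hε
        obtain ⟨j0, hj0⟩ := exists_lt_of_ciInf_lt (show (⨅ j, ρ j) < lam + ε by
          rw [← hlamdef]; linarith)
        refine ⟨j0, fun j hj => ?_⟩
        have h3 : ρ j ≤ ρ j0 := hmono' hj
        have h4 : lam ≤ ρ j := hle j
        rw [abs_of_nonneg (by linarith)]
        linarith
      exact tailContra m hm2 ρ lam hint hlam_ne hdist happrox
  · -- finiteness of fixed leaves
    set mm := m - 1 with hmmdef
    have hmm1 : 1 ≤ mm := by omega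
    have hsub : {x : S1 | x ≠ v ∧ (v, x) ∈ L.leaves ∧ (sig d)^[n] x = x}
        ⊆ {x : S1 | (mm:ℕ) • x = 0} := by
      intro x hx
      have h1 : (m:ℕ) • x = x := by rw [← sig_iter]; exact hx.2.2
      show (mm:ℕ) • x = 0
      have h2 : (mm + 1) • x = x := by
        rw [hmmdef]
        rw [Nat.sub_add_cancel (by omega : 1 ≤ m)]
        exact h1
      rw [succ_nsmul] at h2
      have h3 : mm • x + x = 0 + x := by rw [h2, zero_add]
      exact add_right_cancel h3
    apply Set.Finite.subset ?_ hsub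
    apply Set.Finite.of_finite_image (f := fun x => ⌊(mm:ℝ) * R x⌋)
    · apply Set.Finite.subset (Set.finite_Icc (0:ℤ) mm)
      rintro k ⟨x, hx, rfl⟩
      have h1 : (0:ℝ) ≤ (mm:ℝ) * R x := by
        have := (R_mem x).1
        positivity
      have h2 : (mm:ℝ) * R x < mm := by
        have h3 := (R_mem x).2
        have h4 : (0:ℝ) < mm := by exact_mod_cast hmm1
        nlinarith
      constructor
      · exact Int.floor_nonneg.2 h1
      · have h5 : ((mm:ℤ):ℝ) = ((mm:ℕ):ℝ) := by push_cast; ring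
        have := Int.floor_le_floor (le_of_lt h2)
        calc ⌊(mm:ℝ) * R x⌋ ≤ ⌊((mm:ℕ):ℝ)⌋ := Int.floor_le_floor (le_of_lt h2)
        _ = (mm:ℤ) := by rw [Int.floor_natCast]
    · intro x hx y hy hxy
      simp only at hxy
      have hval : ∀ z : S1, (mm:ℕ) • z = 0 → (mm:ℝ) * R z = ⌊(mm:ℝ) * R z⌋ := by
        intro z hz
        have h1 : ((mm:ℝ) * R z : ℝ) = ((mm:ℕ):ℝ) * R z := by push_cast; ring
        have h2 : (((mm:ℝ) * R z : ℝ) : S1) = 0 := by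
          rw [h1, ← coe_smul_real, coe_R, hz]
        have h3 : R (((mm:ℝ) * R z : ℝ) : S1) = 0 := by rw [h2, R_zero]
        rw [R_coe] at h3
        have h4 := Int.floor_add_fract ((mm:ℝ) * R z)
        rw [h3] at h4
        linarith
      have h1 := hval x hx
      have h2 := hval y hy
      have h3 : (mm:ℝ) * R x = (mm:ℝ) * R y := by rw [h1, h2, hxy]
      have h4 : (0:ℝ) < mm := by exact_mod_cast hmm1
      have h5 : R x = R y := mul_left_cancel₀ (ne_of_gt h4) h3
      exact R_inj h5


end
end
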